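/- arXiv:1512.01937 — 4 statements merged into one kernel-verified Lean document; each statement's English description precedes it below -/
import Mathlib

section
/- Let X be a topological space and Y a disconnected topological space such that every map in K₁(X,Y) ∩ Σ^f(X,Y) belongs to B₁(X,Y). Then X is almost strongly zero-dimensional, i.e., every zero subset of X is a countable union of C-sets. -/
open Set Filter Topology

def IsZeroSet {X : Type*} [TopologicalSpace X] (A : Set X) : Prop :=
  ∃ f : X → ℝ, Continuous f ∧ A = f ⁻¹' {0}

def IsCozeroSet {X : Type*} [TopologicalSpace X] (A : Set X) : Prop := IsZeroSet Aᶜ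

def IsDiscreteFamily {X : Type*} [TopologicalSpace X] {ι : Type*} (U : ι → Set X) : Prop :=
  ∀ x : X, ∃ V ∈ 𝓝 x, {i | (U i ∩ V).Nonempty}.Subsingleton

def IsSFDFamily {X : Type*} [TopologicalSpace X] {ι : Type*} (A : ι → Set X) : Prop :=
  ∃ U : ι → Set X, IsDiscreteFamily U ∧ (∀ i, IsCozeroSet (U i)) ∧ ∀ i, closure (A i) ⊆ U i

def IsSFDSetFamily {X : Type*} [TopologicalSpace X] (𝓐 : Set (Set X)) : Prop :=
  IsSFDFamily (fun A : 𝓐 => (A : Set X))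

def IsBaseFor {X Y : Type*} [TopologicalSpace X] [TopologicalSpace Y]
    (𝓑 : Set (Set X)) (f : X → Y) : Prop :=
  ∀ V : Set Y, IsOpen V → ∃ 𝓢 ⊆ 𝓑, f ⁻¹' V = ⋃₀ 𝓢

def FunctionallyFSigma {X : Type*} [TopologicalSpace X] (A : Set X) : Prop :=
  ∃ F : ℕ → Set X, (∀ n, IsZeroSet (F n)) ∧ A = ⋃ n, F n

def MemK1 {X Y : Type*} [TopologicalSpace X] [TopologicalSpace Y] (f : X → Y) : Prop :=
  ∀ V : Set Y, IsOpen V → FunctionallyFSigma (f ⁻¹' V)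

def MemB1 {X Y : Type*} [TopologicalSpace X] [TopologicalSpace Y] (f : X → Y) : Prop :=
  ∃ g : ℕ → X → Y, (∀ n, Continuous (g n)) ∧
    ∀ x, Tendsto (fun n => g n x) atTop (𝓝 (f x))

def MemSigmaF {X Y : Type*} [TopologicalSpace X] [TopologicalSpace Y] (f : X → Y) : Prop :=
  ∃ 𝓑 : ℕ → Set (Set X), (∀ n, IsSFDSetFamily (𝓑 n)) ∧ IsBaseFor (⋃ n, 𝓑 n) f

def MemSigmaF0 {X Y : Type*} [TopologicalSpace X] [TopologicalSpace Y] (f : X → Y) : Prop :=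
  ∃ 𝓑 : ℕ → Set (Set X), (∀ n, IsSFDSetFamily (𝓑 n)) ∧
    (∀ n, ∀ A ∈ 𝓑 n, IsZeroSet A) ∧ IsBaseFor (⋃ n, 𝓑 n) f

def CompletelySeparatedSets {X : Type*} [TopologicalSpace X] (A B : Set X) : Prop :=
  ∃ h : X → ℝ, Continuous h ∧ (∀ x, h x ∈ Icc (0:ℝ) 1) ∧
    (∀ x ∈ A, h x = 0) ∧ ∀ x ∈ B, h x = 1

def StronglyZeroDimensional (X : Type*) [TopologicalSpace X] : Prop :=
  ∀ A B : Set X, CompletelySeparatedSets A B → ∃ U : Set X, IsClopen U ∧ A ⊆ U ∧ U ⊆ Bᶜ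

def IsCSet {X : Type*} [TopologicalSpace X] (A : Set X) : Prop :=
  ∃ U : ℕ → Set X, (∀ n, IsClopen (U n)) ∧ A = ⋂ n, U n

def IsCSigmaSet {X : Type*} [TopologicalSpace X] (A : Set X) : Prop :=
  ∃ C : ℕ → Set X, (∀ n, IsCSet (C n)) ∧ A = ⋃ n, C n

def AlmostStronglyZeroDimensional (X : Type*) [TopologicalSpace X] : Prop :=
  ∀ A : Set X, IsZeroSet A → IsCSigmaSet A

def CountablyCompactIn {X : Type*} [TopologicalSpace X] (F : Set X) : Prop :=
  ∀ U : ℕ → Set X, (∀ n, IsOpen (U n)) → F ⊆ ⋃ n, U n →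
    ∃ s : Finset ℕ, F ⊆ ⋃ n ∈ s, U n

open Classical in
lemma aux_sfd_singleton {X : Type*} [TopologicalSpace X] (S : Set X) :
    IsSFDSetFamily ({S} : Set (Set X)) := by
  refine ⟨fun _ => Set.univ, ?_, ?_, ?_⟩
  · intro x
    refine ⟨Set.univ, Filter.univ_mem, fun i _ j _ => ?_⟩
    exact Subtype.ext (i.2.trans j.2.symm)
  · intro i
    exact ⟨fun _ => 1, continuous_const, by simp⟩
  · intro i; exact Set.subset_univ _

lemma aux_zero_univ {X : Type*} [TopologicalSpace X] : IsZeroSet (Set.univ : Set X) :=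
  ⟨fun _ => 0, continuous_const, by simp⟩

lemma aux_zero_empty {X : Type*} [TopologicalSpace X] : IsZeroSet (∅ : Set X) :=
  ⟨fun _ => 1, continuous_const, by simp⟩

lemma aux_compl_fsigma {X : Type*} [TopologicalSpace X] {A : Set X} (hA : IsZeroSet A) :
    FunctionallyFSigma Aᶜ := by
  obtain ⟨g, hg, rfl⟩ := hA
  refine ⟨fun n => (fun x => max (1/(n+1 : ℝ) - |g x|) 0) ⁻¹' {0}, ?_, ?_⟩
  · intro n
    exact ⟨_, ((continuous_const.sub (continuous_abs.comp hg)).max continuous_const), rfl⟩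
  · ext x
    simp only [Set.mem_compl_iff, Set.mem_preimage, Set.mem_singleton_iff, Set.mem_iUnion]
    constructor
    · intro hx
      have hpos : 0 < |g x| := abs_pos.mpr hx
      obtain ⟨n, hn⟩ := exists_nat_one_div_lt hpos
      exact ⟨n, max_eq_right (by linarith)⟩
    · rintro ⟨n, hn⟩
      have h1 : 1/(n+1 : ℝ) - |g x| ≤ 0 := le_of_max_le_left (le_of_eq hn)
      have h2 : (0:ℝ) < 1/(n+1 : ℝ) := by positivity
      intro hgx
      rw [hgx] at h1
      simp at h1
      linarith


theorem stmt14 {X Y : Type*} [TopologicalSpace X] [TopologicalSpace Y]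
    (hY : ∃ U V : Set Y, IsClopen U ∧ IsClopen V ∧ U.Nonempty ∧ V.Nonempty ∧
      Disjoint U V ∧ U ∪ V = Set.univ)
    (h : ∀ f : X → Y, MemK1 f → MemSigmaF f → MemB1 f) :
    AlmostStronglyZeroDimensional X := by
  classical
  obtain ⟨U, V, hU, hV, ⟨a, haU⟩, ⟨b, hbV⟩, hdisj, hcov⟩ := hY
  intro A hA
  set f : X → Y := fun x => if x ∈ A then a else b with hf
  -- f ∈ K₁
  have hK1 : MemK1 f := by
    intro W hW
    have hpre : f ⁻¹' W = (if a ∈ W then A else ∅) ∪ (if b ∈ W then Aᶜ else ∅) := by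
      ext x
      by_cases hx : x ∈ A <;> by_cases haW : a ∈ W <;> by_cases hbW : b ∈ W <;>
        simp [hf, hx, haW, hbW]
    rw [hpre]
    by_cases haW : a ∈ W <;> by_cases hbW : b ∈ W <;> simp only [haW, hbW, if_true, if_false]
    · obtain ⟨F, hF, hFeq⟩ := aux_compl_fsigma hA
      refine ⟨fun n => if n = 0 then A else F (n - 1), ?_, ?_⟩
      · intro n
        by_cases hn : n = 0 <;> simp only [hn, if_true, if_false]
        · exact hA
        · exact hF _
      · ext x
        simp only [Set.mem_union, Set.mem_iUnion]
        constructor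
        · rintro (hx | hx)
          · exact ⟨0, by simpa using hx⟩
          · rw [hFeq] at hx
            obtain ⟨n, hn⟩ := Set.mem_iUnion.mp hx
            exact ⟨n + 1, by simpa using hn⟩
        · rintro ⟨n, hn⟩
          by_cases h0 : n = 0
          · left; simpa [h0] using hn
          · right; rw [hFeq]
            simp only [h0, if_false] at hn
            exact Set.mem_iUnion.mpr ⟨n - 1, hn⟩
    · exact ⟨fun _ => A, fun _ => hA, by simp [Set.iUnion_const]⟩
    · obtain ⟨F, hF, hFeq⟩ := aux_compl_fsigma hA
      exact ⟨F, hF, by rw [← hFeq]; simp⟩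
    · exact ⟨fun _ => ∅, fun _ => aux_zero_empty, by simp⟩
  -- f ∈ Σ^f
  have hSig : MemSigmaF f := by
    refine ⟨fun n => if n = 0 then {A} else {Aᶜ}, ?_, ?_⟩
    · intro n
      by_cases hn : n = 0 <;> simp only [hn, if_true, if_false] <;> exact aux_sfd_singleton _
    · intro W hW
      have hAmem : A ∈ ⋃ n, (if n = 0 then {A} else ({Aᶜ} : Set (Set X))) :=
        Set.mem_iUnion.mpr ⟨0, by simp⟩
      have hAcmem : Aᶜ ∈ ⋃ n, (if n = 0 then {A} else ({Aᶜ} : Set (Set X))) :=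
        Set.mem_iUnion.mpr ⟨1, by simp⟩
      have hpre : f ⁻¹' W = (if a ∈ W then A else ∅) ∪ (if b ∈ W then Aᶜ else ∅) := by
        ext x
        by_cases hx : x ∈ A <;> by_cases haW : a ∈ W <;> by_cases hbW : b ∈ W <;>
          simp [hf, hx, haW, hbW]
      by_cases haW : a ∈ W <;> by_cases hbW : b ∈ W
      · refine ⟨{A, Aᶜ}, ?_, ?_⟩
        · intro S hS; rcases hS with rfl | hS
          · exact hAmem
          · rw [Set.mem_singleton_iff] at hS; subst hS; exact hAcmem
        · rw [hpre]; simp [haW, hbW, Set.sUnion_pair]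
      · exact ⟨{A}, by simpa using hAmem, by rw [hpre]; simp [haW, hbW]⟩
      · exact ⟨{Aᶜ}, by simpa using hAcmem, by rw [hpre]; simp [haW, hbW]⟩
      · exact ⟨∅, Set.empty_subset _, by rw [hpre]; simp [haW, hbW]⟩
  obtain ⟨g, hg, htend⟩ := h f hK1 hSig
  -- A = f ⁻¹' U
  have hfA : ∀ x, f x ∈ U ↔ x ∈ A := by
    intro x
    constructor
    · intro hx
      by_contra hxA
      have : f x = b := by simp [hf, hxA]
      rw [this] at hx
      exact Set.disjoint_left.mp hdisj hx hbV
    · intro hx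
      have : f x = a := by simp [hf, hx]
      rw [this]; exact haU
  refine ⟨fun n => ⋂ k, g (n + k) ⁻¹' U, ?_, ?_⟩
  · intro n
    exact ⟨fun k => g (n + k) ⁻¹' U, fun k => hU.preimage (hg (n + k)), rfl⟩
  · ext x
    simp only [Set.mem_iUnion, Set.mem_iInter, Set.mem_preimage]
    constructor
    · intro hx
      have hev : ∀ᶠ k in atTop, g k x ∈ U :=
        (htend x).eventually (hU.isOpen.mem_nhds ((hfA x).mpr hx))
      obtain ⟨N, hN⟩ := eventually_atTop.mp hev
      exact ⟨N, fun k => hN (N + k) (Nat.le_add_right N k)⟩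
    · rintro ⟨n, hn⟩
      have hev : ∀ᶠ k in atTop, g k x ∈ U := by
        rw [eventually_atTop]
        refine ⟨n, fun k hk => ?_⟩
        have := hn (k - n)
        rwa [Nat.add_sub_cancel' hk] at this
      exact (hfA x).mp (hU.isClosed.mem_of_tendsto (htend x) hev)
end

section
/- Let X be an almost strongly zero-dimensional space, Y a T₁-space, and f : X → Y a finite-valued map in K₁(X,Y) (preimages of open sets are functionally F_σ). Then there exists a sequence of continuous finite-valued maps f_n : X → Y which converges stably to f: for every x ∈ X there is n₀ such that f_n(x) = f(x) for all n ≥ n₀. -/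
open Set Filter Topology

-- aux
lemma csigma_iUnion {X : Type*} [TopologicalSpace X] (A : ℕ → Set X)
    (h : ∀ n, IsCSigmaSet (A n)) : IsCSigmaSet (⋃ n, A n) := by
  choose C hC hA using h
  refine ⟨fun k => C k.unpair.1 k.unpair.2, fun k => hC _ _, ?_⟩
  rw [Set.iUnion_unpair fun i j => C i j]
  exact iUnion_congr hA

lemma fiber_csigma {X Y : Type*} [TopologicalSpace X] [TopologicalSpace Y] [T1Space Y]
    (hX : AlmostStronglyZeroDimensional X) (f : X → Y)
    (hfin : (Set.range f).Finite) (hf : MemK1 f) (y : Y) :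
    IsCSigmaSet (f ⁻¹' {y}) := by
  have hV : IsOpen ((Set.range f \ {y})ᶜ) :=
    ((hfin.subset diff_subset).isClosed).isOpen_compl
  have heq : f ⁻¹' ((Set.range f \ {y})ᶜ) = f ⁻¹' {y} := by
    ext x
    simp only [mem_preimage, mem_compl_iff, mem_diff, mem_singleton_iff, not_and, not_not]
    exact ⟨fun h => h (mem_range_self x), fun h _ => h⟩
  obtain ⟨F, hF, hFeq⟩ := hf _ hV
  rw [heq] at hFeq
  rw [hFeq]
  exact csigma_iUnion F fun n => hX _ (hF n)

theorem stmt15 {X Y : Type*} [TopologicalSpace X] [TopologicalSpace Y] [T1Space Y]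
    (hX : AlmostStronglyZeroDimensional X) (f : X → Y)
    (hfin : (Set.range f).Finite) (hf : MemK1 f) :
    ∃ g : ℕ → X → Y, (∀ n, Continuous (g n) ∧ (Set.range (g n)).Finite) ∧
      ∀ x, ∃ n₀, ∀ n ≥ n₀, g n x = f x := by
  classical
  rcases isEmpty_or_nonempty X with hE | hX0
  · refine ⟨fun _ => f, fun n => ⟨?_, hfin⟩, fun x => (hE.false x).elim⟩
    rw [continuous_def]; intro U _
    rw [Set.eq_empty_of_isEmpty (f ⁻¹' U)]; exact isOpen_empty
  obtain ⟨s, hs⟩ := hfin.countable.exists_eq_range (range_nonempty f)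
  -- C-set decompositions of the fibers
  have hfib : ∀ j : ℕ, IsCSigmaSet (f ⁻¹' {s j}) :=
    fun j => fiber_csigma hX f hfin hf (s j)
  choose D hDC hDeq using hfib
  choose U hU hUeq using fun j r => hDC j r
  set W : ℕ → ℕ → Set X := fun k n => ⋂ t ∈ Finset.range (n + 1), U k.unpair.1 k.unpair.2 t
    with hW
  set val : ℕ → Y := fun k => s k.unpair.1 with hval
  have hWclopen : ∀ k n, IsClopen (W k n) :=
    fun k n => isClopen_biInter_finset fun t _ => hU _ _ t
  have hWanti : ∀ k {m n : ℕ}, m ≤ n → W k n ⊆ W k m := by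
    intro k m n hmn z hz
    simp only [hW, mem_iInter] at hz ⊢
    intro t ht
    exact hz t (Finset.mem_range.2 (lt_of_lt_of_le (Finset.mem_range.1 ht) (by omega)))
  have hWD : ∀ j r, D j r = ⋂ n, W (Nat.pair j r) n := by
    intro j r
    rw [hUeq j r]
    ext z
    simp only [hW, mem_iInter, Nat.unpair_pair, Finset.mem_range]
    exact ⟨fun h n t _ => h t, fun h t => h t t (by omega)⟩
  have hWval : ∀ k x, x ∈ ⋂ n, W k n → f x = val k := by
    intro k x hx
    have hx' : x ∈ ⋂ n, W (Nat.pair k.unpair.1 k.unpair.2) n := by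
      rw [Nat.pair_unpair]; exact hx
    rw [← hWD] at hx'
    have : x ∈ f ⁻¹' {s k.unpair.1} := by
      rw [hDeq]; exact mem_iUnion.2 ⟨k.unpair.2, hx'⟩
    exact this
  -- the approximating maps
  set g : ℕ → X → Y := fun n x =>
    if h : ∃ k, k ≤ n ∧ x ∈ W k n then val (Nat.find h) else s 0 with hg
  refine ⟨g, fun n => ⟨?_, ?_⟩, ?_⟩
  · -- continuity
    refine IsLocallyConstant.continuous ((IsLocallyConstant.iff_exists_open _).2 fun x => ?_)
    refine ⟨⋂ k ∈ Finset.range (n + 1), (if x ∈ W k n then W k n else (W k n)ᶜ),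
      isOpen_biInter_finset fun k _ => ?_, ?_, ?_⟩
    · split
      · exact (hWclopen k n).isOpen
      · exact (hWclopen k n).compl.isOpen
    · simp only [mem_iInter]
      intro k _
      by_cases hxk : x ∈ W k n
      · rw [if_pos hxk]; exact hxk
      · rw [if_neg hxk]; exact hxk
    · intro z hz
      have hpat : ∀ k, k ≤ n → (z ∈ W k n ↔ x ∈ W k n) := by
        intro k hk
        simp only [mem_iInter, Finset.mem_range] at hz
        have := hz k (by omega)
        by_cases hxk : x ∈ W k n <;> simp [hxk] at this <;> simp [hxk, this]
      by_cases hx : ∃ k, k ≤ n ∧ x ∈ W k n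
      · have hzz : ∃ k, k ≤ n ∧ z ∈ W k n := by
          obtain ⟨k, hk1, hk2⟩ := hx
          exact ⟨k, hk1, (hpat k hk1).2 hk2⟩
        rw [hg]
        simp only [dif_pos hx, dif_pos hzz]
        congr 1
        have h1 : Nat.find hzz ≤ Nat.find hx := by
          refine Nat.find_min' hzz ?_
          obtain ⟨h1, h2⟩ := Nat.find_spec hx
          exact ⟨h1, (hpat _ h1).2 h2⟩
        have h2 : Nat.find hx ≤ Nat.find hzz := by
          refine Nat.find_min' hx ?_
          obtain ⟨h1, h2⟩ := Nat.find_spec hzz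
          exact ⟨h1, (hpat _ h1).1 h2⟩
        omega
      · have hzz : ¬ ∃ k, k ≤ n ∧ z ∈ W k n := by
          rintro ⟨k, hk1, hk2⟩
          exact hx ⟨k, hk1, (hpat k hk1).1 hk2⟩
        rw [hg]; simp only [dif_neg hx, dif_neg hzz]
  · -- finite range
    refine Set.Finite.subset (((Set.finite_Iic n).image val).insert (s 0)) ?_
    rintro _ ⟨x, rfl⟩
    rw [mem_insert_iff]
    by_cases h : ∃ k, k ≤ n ∧ x ∈ W k n
    · exact Or.inr ⟨Nat.find h, (Nat.find_spec h).1, by simp only [hg, dif_pos h]⟩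
    · exact Or.inl (by simp only [hg, dif_neg h])
  · -- stable convergence
    intro x
    have hx : f x ∈ range s := hs ▸ mem_range_self x
    obtain ⟨j, hj⟩ := hx
    have hxD : x ∈ ⋃ r, D j r := by
      rw [← hDeq]; exact mem_singleton_iff.2 hj.symm
    obtain ⟨r, hr⟩ := mem_iUnion.1 hxD
    set k₀ := Nat.pair j r with hk₀
    have hxk₀ : ∀ n, x ∈ W k₀ n := by
      have := (hWD j r) ▸ hr
      exact fun n => mem_iInter.1 this n
    have hvk₀ : val k₀ = f x := by
      rw [hval]; simp only [hk₀, Nat.unpair_pair]; exact hj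
    -- for each k < k₀ with x eventually escaping
    have hesc : ∀ k, ∃ N, x ∈ ⋂ n, W k n ∨ ∀ n ≥ N, x ∉ W k n := by
      intro k
      by_cases hxk : x ∈ ⋂ n, W k n
      · exact ⟨0, Or.inl hxk⟩
      · obtain ⟨m, hm⟩ := not_forall.1 (by simpa [mem_iInter] using hxk)
        exact ⟨m, Or.inr fun n hn hcon => hm (hWanti k hn hcon)⟩
    choose N hN using hesc
    refine ⟨max k₀ ((Finset.range k₀).sup N), fun n hn => ?_⟩
    have hk₀n : k₀ ≤ n := le_trans (le_max_left _ _) hn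
    have hex : ∃ k, k ≤ n ∧ x ∈ W k n := ⟨k₀, hk₀n, hxk₀ n⟩
    simp only [hg, dif_pos hex]
    set k := Nat.find hex with hk
    have hkle : k ≤ k₀ := Nat.find_min' hex ⟨hk₀n, hxk₀ n⟩
    have hxWk : x ∈ W k n := (Nat.find_spec hex).2
    rcases eq_or_lt_of_le hkle with heq | hlt
    · rw [heq, hvk₀]
    · rcases hN k with hin | hout
      · exact (hWval k x hin).symm
      · exfalso
        have hNk : N k ≤ n := le_trans (le_trans (Finset.le_sup (Finset.mem_range.2 hlt))
          (le_max_right _ _)) hn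
        exact hout n hNk hxWk
end

section
/- Let X be an almost strongly zero-dimensional space, (Y,d) a metric space, and (f_n) a sequence of finite-valued maps f_n ∈ K₁(X,Y) converging uniformly to f : X → Y. Then f ∈ B₁(X,Y), i.e., f is a pointwise limit of a sequence of continuous maps from X to Y. -/
open Set Filter Topology

section Core
variable {X Y : Type*} [TopologicalSpace X] [MetricSpace Y]

/-- clopen approximation at depth k of the C-set `⋂ t, W n j t` -/
private def Vset (W : ℕ → ℕ → ℕ → Set X) (n j k : ℕ) : Set X :=
  ⋂ t ∈ Finset.range (k+1), W n j t

open Classical in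
private noncomputable def sel (W : ℕ → ℕ → ℕ → Set X) (z : ℕ → ℕ → Y) (y₀ : Y)
    (k n : ℕ) (x : X) : Y :=
  if h : ∃ j, j ≤ k ∧ x ∈ Vset W n j k then z n (Nat.find h) else y₀

private def chainP (W : ℕ → ℕ → ℕ → Set X) (z : ℕ → ℕ → Y) (y₀ : Y)
    (k : ℕ) (x : X) (n : ℕ) : Prop :=
  ∀ n' < n, dist (sel W z y₀ k n' x) (sel W z y₀ k (n'+1) x) ≤ 3 * (2:ℝ)⁻¹ ^ n'

open Classical in
private noncomputable def gapp (W : ℕ → ℕ → ℕ → Set X) (z : ℕ → ℕ → Y) (y₀ : Y)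
    (k : ℕ) (x : X) : Y :=
  sel W z y₀ k (Nat.findGreatest (chainP W z y₀ k x) k) x

private lemma findGreatest_congr {P Q : ℕ → Prop} [DecidablePred P] [DecidablePred Q] :
    ∀ {k}, (∀ n ≤ k, (P n ↔ Q n)) → Nat.findGreatest P k = Nat.findGreatest Q k := by
  intro k
  induction k with
  | zero => intro _; rfl
  | succ k ih =>
    intro h
    rw [Nat.findGreatest_succ, Nat.findGreatest_succ,
      if_congr (h (k+1) le_rfl) rfl (ih fun n hn => h n (hn.trans (Nat.le_succ k)))]

lemma coreB1 (y₀ : Y) (f : X → Y) (W : ℕ → ℕ → ℕ → Set X) (z : ℕ → ℕ → Y)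
    (hW : ∀ n j t, IsClopen (W n j t))
    (hcov : ∀ n x, ∃ j, x ∈ ⋂ t, W n j t)
    (hap : ∀ n j x, x ∈ ⋂ t, W n j t → dist (z n j) (f x) ≤ 2 * (2:ℝ)⁻¹ ^ n) :
    MemB1 f := by
  classical
  have hVclopen : ∀ n j k, IsClopen (Vset W n j k) := by
    intro n j k
    have : (↑(Finset.range (k+1)) : Set ℕ).Finite := (Finset.range (k+1)).finite_toSet
    exact this.isClopen_biInter fun t _ => hW n j t
  refine ⟨gapp W z y₀, ?_, ?_⟩
  · -- continuity
    intro k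
    rw [continuous_iff_continuousAt]
    intro x
    set U : Set X := ⋂ n ∈ Finset.range (k+1), ⋂ j ∈ Finset.range (k+1),
      (if x ∈ Vset W n j k then Vset W n j k else (Vset W n j k)ᶜ) with hU
    have hUopen : IsOpen U := by
      refine isOpen_biInter_finset fun n _ => isOpen_biInter_finset fun j _ => ?_
      split
      · exact (hVclopen n j k).2
      · exact (hVclopen n j k).1.isOpen_compl
    have hxU : x ∈ U := by
      refine mem_iInter₂.2 fun n _ => mem_iInter₂.2 fun j _ => ?_
      by_cases h : x ∈ Vset W n j k <;> simp [h]
    have key : ∀ x' ∈ U, gapp W z y₀ k x' = gapp W z y₀ k x := by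
      intro x' hx'
      have hmem : ∀ n ≤ k, ∀ j ≤ k, (x' ∈ Vset W n j k ↔ x ∈ Vset W n j k) := by
        intro n hn j hj
        have h1 := mem_iInter₂.1 (mem_iInter₂.1 hx' n (Finset.mem_range.2 (Nat.lt_succ_of_le hn)))
          j (Finset.mem_range.2 (Nat.lt_succ_of_le hj))
        by_cases h : x ∈ Vset W n j k
        · rw [if_pos h] at h1; exact ⟨fun _ => h, fun _ => h1⟩
        · rw [if_neg h] at h1; exact ⟨fun hc => absurd hc h1, fun hc => absurd hc h⟩
      have hs : ∀ n ≤ k, sel W z y₀ k n x' = sel W z y₀ k n x := by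
        intro n hn
        have hiff : ∀ j, (j ≤ k ∧ x' ∈ Vset W n j k) ↔ (j ≤ k ∧ x ∈ Vset W n j k) :=
          fun j => and_congr_right fun hj => hmem n hn j hj
        unfold sel
        by_cases h1 : ∃ j, j ≤ k ∧ x ∈ Vset W n j k
        · have h2 : ∃ j, j ≤ k ∧ x' ∈ Vset W n j k := by
            obtain ⟨j, hj⟩ := h1; exact ⟨j, (hiff j).2 hj⟩
          rw [dif_pos h2, dif_pos h1]
          congr 1
          exact le_antisymm (Nat.find_le ((hiff _).2 (Nat.find_spec h1)))
            (Nat.find_le ((hiff _).1 (Nat.find_spec h2)))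
        · have h2 : ¬ ∃ j, j ≤ k ∧ x' ∈ Vset W n j k := by
            intro ⟨j, hj⟩; exact h1 ⟨j, (hiff j).1 hj⟩
          rw [dif_neg h2, dif_neg h1]
      have hPiff : ∀ n ≤ k, (chainP W z y₀ k x' n ↔ chainP W z y₀ k x n) := by
        intro n hn
        unfold chainP
        refine forall_congr' fun n' => forall_congr' fun hn' => ?_
        rw [hs n' (le_trans (le_of_lt hn') hn), hs (n'+1) (le_trans hn' hn)]
      unfold gapp
      rw [findGreatest_congr hPiff]
      exact hs _ (Nat.findGreatest_le k)
    exact continuousAt_const.congr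
      (Filter.eventuallyEq_of_mem (hUopen.mem_nhds hxU) key).symm
  · intro x
    rw [Metric.tendsto_atTop]
    set a : ℕ → ℕ := fun n => Nat.find (hcov n x) with ha
    have hxa : ∀ n, x ∈ ⋂ t, W n (a n) t := fun n => Nat.find_spec (hcov n x)
    have hza : ∀ n, dist (z n (a n)) (f x) ≤ 2 * (2:ℝ)⁻¹ ^ n := fun n => hap n (a n) x (hxa n)
    have hstab : ∀ n, ∃ K, ∀ k ≥ K, sel W z y₀ k n x = z n (a n) := by
      intro n
      have hnot : ∀ j, ∃ t, j < a n → x ∉ W n j t := by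
        intro j
        by_cases hj : j < a n
        · have h1 := Nat.find_min (hcov n x) hj
          rw [mem_iInter] at h1; push_neg at h1
          obtain ⟨t, ht⟩ := h1
          exact ⟨t, fun _ => ht⟩
        · exact ⟨0, fun h => absurd h hj⟩
      choose tt htt using hnot
      refine ⟨max (a n) ((Finset.range (a n)).sup tt), fun k hk => ?_⟩
      have hak : a n ≤ k := le_trans (le_max_left _ _) hk
      have hxV : x ∈ Vset W n (a n) k :=
        mem_iInter₂.2 fun t _ => mem_iInter.1 (hxa n) t
      have hex : ∃ j, j ≤ k ∧ x ∈ Vset W n j k := ⟨a n, hak, hxV⟩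
      unfold sel
      rw [dif_pos hex]
      congr 1
      rw [Nat.find_eq_iff]
      refine ⟨⟨hak, hxV⟩, fun j hj hc => ?_⟩
      have h1 : tt j ≤ k :=
        le_trans (le_trans (Finset.le_sup (Finset.mem_range.2 hj)) (le_max_right _ _)) hk
      exact htt j hj (mem_iInter₂.1 hc.2 (tt j) (Finset.mem_range.2 (Nat.lt_succ_of_le h1)))
    choose KK hKK using hstab
    intro ε hε
    have h2 : Tendsto (fun n : ℕ => ((2:ℝ)⁻¹) ^ n) atTop (𝓝 0) :=
      tendsto_pow_atTop_nhds_zero_of_lt_one (by norm_num) (by norm_num)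
    have h8 : Tendsto (fun n : ℕ => 8 * ((2:ℝ)⁻¹) ^ n) atTop (𝓝 (0:ℝ)) := by
      simpa using h2.const_mul (8:ℝ)
    obtain ⟨N, hN⟩ := (h8.eventually_lt_const hε).exists
    refine ⟨max N ((Finset.range (N+1)).sup KK), fun k hk => ?_⟩
    have hNk : N ≤ k := le_trans (le_max_left _ _) hk
    have hsv : ∀ n ≤ N, sel W z y₀ k n x = z n (a n) := fun n hn =>
      hKK n k (le_trans (le_trans (Finset.le_sup (Finset.mem_range.2 (Nat.lt_succ_of_le hn)))
        (le_max_right _ _)) hk)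
    have hPN : chainP W z y₀ k x N := by
      intro n' hn'
      rw [hsv n' (le_of_lt hn'), hsv (n'+1) hn']
      have hd1 := hza n'
      have hd2 := hza (n'+1)
      have htr := dist_triangle (z n' (a n')) (f x) (z (n'+1) (a (n'+1)))
      rw [dist_comm (f x)] at htr
      have hp : ((2:ℝ)⁻¹) ^ (n'+1) = (2:ℝ)⁻¹ ^ n' * 2⁻¹ := pow_succ _ _
      rw [hp] at hd2
      calc dist (z n' (a n')) (z (n'+1) (a (n'+1))) ≤ _ := htr
        _ ≤ 3 * (2:ℝ)⁻¹ ^ n' := by linarith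
    set m := Nat.findGreatest (chainP W z y₀ k x) k with hm
    have hPm : chainP W z y₀ k x m := Nat.findGreatest_spec hNk hPN
    have hNm : N ≤ m := Nat.le_findGreatest hNk hPN
    have hchain : ∀ i, N + i ≤ m →
        dist (sel W z y₀ k (N+i) x) (sel W z y₀ k N x)
          ≤ 6 * (2:ℝ)⁻¹ ^ N - 6 * (2:ℝ)⁻¹ ^ (N+i) := by
      intro i
      induction i with
      | zero => intro _; simp
      | succ i ih =>
        intro h
        have hi := ih (by omega)
        have hd := hPm (N+i) (by omega)
        rw [dist_comm] at hd
        have htr := dist_triangle (sel W z y₀ k (N+i+1) x) (sel W z y₀ k (N+i) x)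
          (sel W z y₀ k N x)
        have hp : ((2:ℝ)⁻¹) ^ (N+i+1) = (2:ℝ)⁻¹ ^ (N+i) * 2⁻¹ := pow_succ _ _
        have heq : N + (i+1) = N + i + 1 := by omega
        rw [heq, hp]
        linarith
    have hfmN : dist (sel W z y₀ k m x) (sel W z y₀ k N x) ≤ 6 * (2:ℝ)⁻¹ ^ N := by
      have h1 := hchain (m - N) (by omega)
      have hmeq : N + (m - N) = m := by omega
      rw [hmeq] at h1
      have h2 : (0:ℝ) ≤ 6 * (2:ℝ)⁻¹ ^ m := by positivity
      linarith
    have hfin : dist (gapp W z y₀ k x) (f x) ≤ 8 * (2:ℝ)⁻¹ ^ N := by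
      show dist (sel W z y₀ k (Nat.findGreatest (chainP W z y₀ k x) k) x) (f x) ≤ _
      rw [← hm]
      calc dist (sel W z y₀ k m x) (f x)
          ≤ dist (sel W z y₀ k m x) (sel W z y₀ k N x) + dist (sel W z y₀ k N x) (f x) :=
            dist_triangle _ _ _
        _ ≤ 6 * (2:ℝ)⁻¹ ^ N + 2 * (2:ℝ)⁻¹ ^ N := by
            have h3 : dist (sel W z y₀ k N x) (f x) ≤ 2 * (2:ℝ)⁻¹ ^ N := by
              rw [hsv N le_rfl]; exact hza N
            exact add_le_add hfmN h3
        _ = 8 * (2:ℝ)⁻¹ ^ N := by ring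
    exact lt_of_le_of_lt hfin hN
end Core


private lemma functionallyFSigma_isCSigmaSet {X : Type*} [TopologicalSpace X]
    (hX : AlmostStronglyZeroDimensional X) {A : Set X} (h : FunctionallyFSigma A) :
    IsCSigmaSet A := by
  obtain ⟨Z, hZ, rfl⟩ := h
  choose C hC hCeq using fun n => hX (Z n) (hZ n)
  refine ⟨fun p => C p.unpair.1 p.unpair.2, fun p => hC _ _, ?_⟩
  ext x
  simp only [mem_iUnion]
  constructor
  · rintro ⟨n, hx⟩
    rw [hCeq n] at hx
    obtain ⟨m, hm⟩ := mem_iUnion.1 hx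
    exact ⟨Nat.pair n m, by rw [Nat.unpair_pair]; exact hm⟩
  · rintro ⟨p, hp⟩
    exact ⟨p.unpair.1, by rw [hCeq]; exact mem_iUnion.2 ⟨p.unpair.2, hp⟩⟩

theorem stmt16 {X Y : Type*} [TopologicalSpace X] [MetricSpace Y]
    (hX : AlmostStronglyZeroDimensional X) (f : X → Y) (F : ℕ → X → Y)
    (hfin : ∀ n, (Set.range (F n)).Finite) (hK : ∀ n, MemK1 (F n))
    (hu : TendstoUniformly F f Filter.atTop) : MemB1 f := by
  classical
  by_cases hXe : IsEmpty X
  · refine ⟨fun _ => f, fun n => continuous_def.2 fun s _ => ?_, fun x => (hXe.false x).elim⟩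
    rw [Set.eq_empty_of_isEmpty (f ⁻¹' s)]
    exact isOpen_empty
  rw [not_isEmpty_iff] at hXe
  obtain ⟨x₀⟩ := hXe
  have hsub : ∀ k : ℕ, ∃ n, ∀ x, dist (f x) (F n x) < (2:ℝ)⁻¹ ^ k := fun k =>
    ((Metric.tendstoUniformly_iff.1 hu) ((2:ℝ)⁻¹ ^ k) (by positivity)).exists
  choose φ hφ using hsub
  have hdata : ∀ k : ℕ, ∃ (D : ℕ → Set X) (z : ℕ → Y),
      (∀ j, IsCSet (D j)) ∧ (∀ x, ∃ j, x ∈ D j) ∧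
      (∀ j x, x ∈ D j → dist (z j) (f x) ≤ 2 * (2:ℝ)⁻¹ ^ k) := by
    intro k
    have hS : (Set.range (F (φ k))).Countable := (hfin (φ k)).countable
    have hSne : (Set.range (F (φ k))).Nonempty := ⟨F (φ k) x₀, mem_range_self x₀⟩
    obtain ⟨e, he⟩ := hS.exists_eq_range hSne
    have hA : ∀ i : ℕ, IsCSigmaSet (F (φ k) ⁻¹' Metric.ball (e i) ((2:ℝ)⁻¹ ^ k)) := fun i =>
      functionallyFSigma_isCSigmaSet hX (hK (φ k) _ Metric.isOpen_ball)
    choose C hC hCeq using hA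
    refine ⟨fun j => C j.unpair.1 j.unpair.2, fun j => e j.unpair.1,
      fun j => hC _ _, ?_, ?_⟩
    · intro x
      have hx : F (φ k) x ∈ Set.range e := by rw [← he]; exact mem_range_self x
      obtain ⟨i, hi⟩ := hx
      have hxA : x ∈ F (φ k) ⁻¹' Metric.ball (e i) ((2:ℝ)⁻¹ ^ k) := by
        simp only [mem_preimage, Metric.mem_ball, ← hi, dist_self]
        positivity
      rw [hCeq i] at hxA
      obtain ⟨m, hm⟩ := mem_iUnion.1 hxA
      exact ⟨Nat.pair i m, by simp only [Nat.unpair_pair]; exact hm⟩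
    · intro j x hx
      have hxA : x ∈ F (φ k) ⁻¹' Metric.ball (e j.unpair.1) ((2:ℝ)⁻¹ ^ k) := by
        rw [hCeq j.unpair.1]; exact mem_iUnion.2 ⟨j.unpair.2, hx⟩
      have h1 : dist (F (φ k) x) (e j.unpair.1) < (2:ℝ)⁻¹ ^ k := by
        simpa [Metric.mem_ball] using hxA
      have h2 : dist (f x) (F (φ k) x) < (2:ℝ)⁻¹ ^ k := hφ k x
      rw [dist_comm] at h1 h2
      calc dist (e j.unpair.1) (f x)
          ≤ dist (e j.unpair.1) (F (φ k) x) + dist (F (φ k) x) (f x) := dist_triangle _ _ _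
        _ ≤ 2 * (2:ℝ)⁻¹ ^ k := by linarith
  choose D z hDC hDcov hDap using hdata
  choose W hWclopen hWeq using fun n j => hDC n j
  apply coreB1 (f x₀) f W z hWclopen
  · intro n x
    obtain ⟨j, hj⟩ := hDcov n x
    exact ⟨j, by rw [← hWeq n j]; exact hj⟩
  · intro n j x hx
    exact hDap n j x (by rw [hWeq n j]; exact hx)
end

section
/- Let X be either (a) a locally compact paracompact Hausdorff space or (b) a countably compact space, and let Y be a disconnected metrizable space. Then K₁(X,Y) ∩ Σ^f(X,Y) = B₁(X,Y) holds if and only if X is strongly zero-dimensional. -/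
open Set Filter Topology

section Basics

variable {X : Type*} [TopologicalSpace X]

lemma isZeroSet_empty : IsZeroSet (∅ : Set X) :=
  ⟨fun _ => 1, continuous_const, by ext x; simp⟩

lemma isZeroSet_univ : IsZeroSet (univ : Set X) :=
  ⟨fun _ => 0, continuous_const, by ext x; simp⟩

lemma IsZeroSet.isClosed {A : Set X} (h : IsZeroSet A) : IsClosed A := by
  obtain ⟨f, hf, rfl⟩ := h; exact isClosed_singleton.preimage hf

lemma IsZeroSet.inter {A B : Set X} (hA : IsZeroSet A) (hB : IsZeroSet B) :
    IsZeroSet (A ∩ B) := by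
  obtain ⟨f, hf, rfl⟩ := hA; obtain ⟨g, hg, rfl⟩ := hB
  refine ⟨fun x => |f x| + |g x|, hf.abs.add hg.abs, ?_⟩
  ext x
  simp only [mem_inter_iff, mem_preimage, mem_singleton_iff]
  rw [add_eq_zero_iff_of_nonneg (abs_nonneg (f x)) (abs_nonneg (g x)), abs_eq_zero, abs_eq_zero]

lemma IsZeroSet.union {A B : Set X} (hA : IsZeroSet A) (hB : IsZeroSet B) :
    IsZeroSet (A ∪ B) := by
  obtain ⟨f, hf, rfl⟩ := hA; obtain ⟨g, hg, rfl⟩ := hB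
  exact ⟨fun x => f x * g x, hf.mul hg, by ext x; simp [mul_eq_zero]⟩

lemma IsZeroSet.preimage {Y : Type*} [TopologicalSpace Y] {A : Set Y} (hA : IsZeroSet A)
    {g : X → Y} (hg : Continuous g) : IsZeroSet (g ⁻¹' A) := by
  obtain ⟨f, hf, rfl⟩ := hA; exact ⟨f ∘ g, hf.comp hg, rfl⟩

lemma isZeroSet_iInter {Z : ℕ → Set X} (h : ∀ n, IsZeroSet (Z n)) :
    IsZeroSet (⋂ n, Z n) := by
  choose f hf hZ using h
  set g : ℕ → X → ℝ := fun n x => min |f n x| ((1/2 : ℝ) ^ n) with hg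
  have hg0 : ∀ n x, 0 ≤ g n x := fun n x => le_min (abs_nonneg _) (by positivity)
  have hgle : ∀ n x, g n x ≤ (1/2 : ℝ) ^ n := fun n x => min_le_right _ _
  have hsum : ∀ x, Summable fun n => g n x := fun x =>
    Summable.of_nonneg_of_le (fun n => hg0 n x) (fun n => hgle n x) summable_geometric_two
  refine ⟨fun x => ∑' n, g n x, ?_, ?_⟩
  · refine continuous_tsum (fun n => ((hf n).abs.min continuous_const)) summable_geometric_two ?_
    intro n x
    rw [Real.norm_of_nonneg (hg0 n x)]; exact hgle n x
  · ext x
    simp only [mem_iInter, mem_preimage, mem_singleton_iff]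
    constructor
    · intro hx
      have : ∀ n, g n x = 0 := by
        intro n
        have hxn : x ∈ Z n := hx n
        rw [hZ n] at hxn
        simp only [mem_preimage, mem_singleton_iff] at hxn
        simp [hg, hxn]
      simp [this]
    · intro hx n
      have h1 : g n x ≤ ∑' m, g m x :=
        Summable.le_tsum (hsum x) n (fun j _ => hg0 j x)
      have h2 : g n x = 0 := le_antisymm (hx ▸ h1) (hg0 n x)
      have : |f n x| = 0 := by
        rcases min_cases |f n x| ((1/2:ℝ)^n) with ⟨heq, _⟩ | ⟨heq, hle⟩
        · rw [hg] at h2; simp only at h2; rw [heq] at h2; exact h2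
        · exfalso
          rw [hg] at h2; simp only at h2; rw [heq] at h2
          have : (0:ℝ) < (1/2:ℝ)^n := by positivity
          linarith
      rw [hZ n]
      simpa [abs_eq_zero] using this

lemma isZeroSet_le {h : X → ℝ} (hc : Continuous h) (c : ℝ) : IsZeroSet {x | h x ≤ c} := by
  refine ⟨fun x => max (h x - c) 0, (hc.sub continuous_const).max continuous_const, ?_⟩
  ext x
  simp [max_eq_right_iff, sub_nonpos]

lemma isZeroSet_ge {h : X → ℝ} (hc : Continuous h) (c : ℝ) : IsZeroSet {x | c ≤ h x} := by
  have := isZeroSet_le (hc.neg) (-c)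
  convert this using 1
  ext x; simp

lemma isCozeroSet_lt {h : X → ℝ} (hc : Continuous h) (c : ℝ) : IsCozeroSet {x | h x < c} := by
  have : {x | h x < c}ᶜ = {x | c ≤ h x} := by ext x; simp [not_lt]
  rw [IsCozeroSet, this]; exact isZeroSet_ge hc c

lemma isCozeroSet_gt {h : X → ℝ} (hc : Continuous h) (c : ℝ) : IsCozeroSet {x | c < h x} := by
  have : {x | c < h x}ᶜ = {x | h x ≤ c} := by ext x; simp [not_lt]
  rw [IsCozeroSet, this]; exact isZeroSet_le hc c

lemma isCozeroSet_empty : IsCozeroSet (∅ : Set X) := by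
  rw [IsCozeroSet, compl_empty]; exact isZeroSet_univ

lemma isCozeroSet_univ : IsCozeroSet (univ : Set X) := by
  rw [IsCozeroSet, compl_univ]; exact isZeroSet_empty

lemma IsCozeroSet.inter {A B : Set X} (hA : IsCozeroSet A) (hB : IsCozeroSet B) :
    IsCozeroSet (A ∩ B) := by
  rw [IsCozeroSet, compl_inter]; exact IsZeroSet.union hA hB

lemma IsCozeroSet.preimage {Y : Type*} [TopologicalSpace Y] {A : Set Y} (hA : IsCozeroSet A)
    {g : X → Y} (hg : Continuous g) : IsCozeroSet (g ⁻¹' A) := by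
  rw [IsCozeroSet, ← preimage_compl]; exact IsZeroSet.preimage hA hg

/-- A cozero set is an increasing countable union of zero sets. -/
lemma IsCozeroSet.exists_zero_seq {G : Set X} (hG : IsCozeroSet G) :
    ∃ Z : ℕ → Set X, (∀ n, IsZeroSet (Z n)) ∧ (∀ n, Z n ⊆ Z (n+1)) ∧ G = ⋃ n, Z n := by
  obtain ⟨ψ, hψ, hGc⟩ := hG
  have hGeq : G = {x | ψ x ≠ 0} := by
    have := congrArg compl hGc
    rw [compl_compl] at this
    rw [this]; ext x; simp
  refine ⟨fun n => {x | (1 : ℝ)/(n+1) ≤ |ψ x|}, fun n => isZeroSet_ge hψ.abs _, ?_, ?_⟩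
  · intro n x hx
    simp only [mem_setOf_eq] at hx ⊢
    refine le_trans ?_ hx
    apply one_div_le_one_div_of_le <;> [positivity; (push_cast; linarith)]
  · rw [hGeq]; ext x
    simp only [mem_setOf_eq, mem_iUnion]
    constructor
    · intro hx
      obtain ⟨n, hn⟩ := exists_nat_one_div_lt (abs_pos.mpr hx)
      exact ⟨n, by push_cast at hn ⊢; linarith⟩
    · rintro ⟨n, hn⟩
      intro h0
      rw [h0] at hn; simp only [abs_zero] at hn
      have : (0:ℝ) < 1/(n+1) := by positivity
      linarith

lemma IsClosed.isZeroSet {Y : Type*} [MetricSpace Y] {A : Set Y} (h : IsClosed A) :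
    IsZeroSet A := by
  rcases A.eq_empty_or_nonempty with rfl | hne
  · exact isZeroSet_empty
  · exact ⟨fun y => Metric.infDist y A, Metric.continuous_infDist_pt A,
      by ext y; simpa using h.mem_iff_infDist_zero hne⟩

lemma IsOpen.isCozeroSet {Y : Type*} [MetricSpace Y] {A : Set Y} (h : IsOpen A) :
    IsCozeroSet A := h.isClosed_compl.isZeroSet

/-- Disjoint zero sets are completely separated. -/
lemma completelySeparated_of_zeroSets {A B : Set X} (hA : IsZeroSet A) (hB : IsZeroSet B)
    (hd : A ∩ B = ∅) : CompletelySeparatedSets A B := by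
  obtain ⟨f, hf, rfl⟩ := hA; obtain ⟨g, hg, rfl⟩ := hB
  have hpos : ∀ x, 0 < |f x| + |g x| := by
    intro x
    rcases (abs_nonneg (f x)).lt_or_eq with h1 | h1
    · linarith [abs_nonneg (g x)]
    rcases (abs_nonneg (g x)).lt_or_eq with h2 | h2
    · linarith
    exfalso
    have hxA : x ∈ f ⁻¹' {0} := by simpa [abs_eq_zero] using h1.symm
    have hxB : x ∈ g ⁻¹' {0} := by simpa [abs_eq_zero] using h2.symm
    exact absurd (mem_inter hxA hxB) (by rw [hd]; exact notMem_empty x)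
  refine ⟨fun x => |f x| / (|f x| + |g x|), ?_, ?_, ?_, ?_⟩
  · exact hf.abs.div (hf.abs.add hg.abs) (fun x => (hpos x).ne')
  · intro x
    constructor
    · positivity
    · rw [div_le_one (hpos x)]; linarith [abs_nonneg (g x)]
  · intro x hx
    simp only [mem_preimage, mem_singleton_iff] at hx
    simp [hx]
  · intro x hx
    simp only [mem_preimage, mem_singleton_iff] at hx
    show |f x| / (|f x| + |g x|) = 1
    rw [hx]
    rw [abs_zero, add_zero, div_self]
    intro h0
    have hf0 : x ∈ f ⁻¹' {0} := by
      simp only [mem_preimage, mem_singleton_iff]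
      exact abs_eq_zero.mp h0
    have hg0 : x ∈ g ⁻¹' {0} := by
      simp only [mem_preimage, mem_singleton_iff]; exact hx
    exact absurd (mem_inter hf0 hg0) (by rw [hd]; exact notMem_empty x)

/-- In a strongly zero-dimensional space, a zero set inside a cozero set is the intersection
of a decreasing sequence of clopen sets contained in the cozero set. -/
lemma StronglyZeroDimensional.cset_between (hX : StronglyZeroDimensional X)
    {Z G : Set X} (hZ : IsZeroSet Z) (hG : IsCozeroSet G) (hZG : Z ⊆ G) :
    ∃ W : ℕ → Set X, (∀ n, IsClopen (W n)) ∧ (∀ n, W (n+1) ⊆ W n) ∧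
      (∀ n, Z ⊆ W n) ∧ (∀ n, W n ⊆ G) ∧ Z = ⋂ n, W n := by
  have hd : Z ∩ Gᶜ = ∅ := by
    ext x; simp only [mem_inter_iff, mem_compl_iff, mem_empty_iff_false, iff_false]
    rintro ⟨h1, h2⟩; exact h2 (hZG h1)
  obtain ⟨h, hc, hmem, hA, hB⟩ := completelySeparated_of_zeroSets hZ hG hd
  -- replace h so that its zero set is exactly Z
  obtain ⟨ψ, hψ, hZeq⟩ := hZ
  set h' : X → ℝ := fun x => max (h x) (min |ψ x| 1) with hh'
  have hc' : Continuous h' := hc.max (hψ.abs.min continuous_const)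
  have hmem' : ∀ x, h' x ∈ Icc (0:ℝ) 1 := by
    intro x
    constructor
    · exact le_max_of_le_left (hmem x).1
    · exact max_le (hmem x).2 (min_le_right _ _)
  have hA' : ∀ x ∈ Z, h' x = 0 := by
    intro x hx
    have h1 : h x = 0 := hA x hx
    have h2 : ψ x = 0 := by rw [hZeq] at hx; simpa using hx
    simp [hh', h1, h2]
  have hB' : ∀ x ∈ Gᶜ, h' x = 1 := by
    intro x hx
    have h1 : h x = 1 := hB x hx
    rw [hh']; simp only [h1]
    rw [max_eq_left (min_le_right _ _)]
  have hZ' : ∀ x, h' x ≤ 0 → x ∈ Z := by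
    intro x hx
    have h2 : min |ψ x| 1 ≤ 0 := le_trans (le_max_right _ _) hx
    have : |ψ x| ≤ 0 := by
      rcases min_cases |ψ x| (1:ℝ) with ⟨heq, _⟩ | ⟨heq, hle⟩
      · rwa [heq] at h2
      · exfalso; rw [heq] at h2; linarith
    rw [hZeq]
    simpa [abs_eq_zero] using le_antisymm this (abs_nonneg _)
  -- clopen sets between level sets
  have key : ∀ n : ℕ, ∃ W : Set X, IsClopen W ∧ {x | h' x ≤ 1/(n+3)} ⊆ W ∧
      W ⊆ {x | h' x < 1/(n+2)} := by
    intro n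
    have hsep : CompletelySeparatedSets {x | h' x ≤ 1/(n+3)} {x | 1/(n+2) ≤ h' x} := by
      set a : ℝ := 1/(n+3)
      set b : ℝ := 1/(n+2)
      have hab : a < b := by
        apply one_div_lt_one_div_of_lt <;> push_cast <;> linarith
      refine ⟨fun x => max 0 (min 1 ((h' x - a)/(b-a))), ?_, ?_, ?_, ?_⟩
      · exact continuous_const.max (continuous_const.min
          ((hc'.sub continuous_const).div_const _))
      · intro x; constructor
        · exact le_max_left _ _
        · exact max_le (by norm_num) (min_le_left _ _)
      · intro x hx
        simp only [mem_setOf_eq] at hx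
        have ht : (h' x - a)/(b-a) ≤ 0 := div_nonpos_of_nonpos_of_nonneg (by linarith) (by linarith)
        show max 0 (min 1 ((h' x - a)/(b-a))) = 0
        rw [max_eq_left (le_trans (min_le_right _ _) ht)]
      · intro x hx
        simp only [mem_setOf_eq] at hx
        have h1 : (1:ℝ) ≤ (h' x - a)/(b-a) := by
          rw [le_div_iff₀ (by linarith)]; linarith
        show max 0 (min 1 ((h' x - a)/(b-a))) = 1
        rw [min_eq_left h1, max_eq_right (by norm_num)]
    obtain ⟨W, hW, hW1, hW2⟩ := hX _ _ hsep
    refine ⟨W, hW, hW1, ?_⟩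
    intro x hx
    have := hW2 hx
    simp only [mem_compl_iff, mem_setOf_eq, not_le] at this
    exact this
  choose W₀ hW₀ hW₀1 hW₀2 using key
  refine ⟨fun n => ⋂ k ∈ Finset.range (n+1), W₀ k, ?_, ?_, ?_, ?_, ?_⟩
  · intro n
    exact isClopen_biInter_finset (fun k _ => hW₀ k)
  · intro n
    intro x hx
    simp only [mem_iInter] at hx ⊢
    intro k hk
    exact hx k (Finset.mem_range.mpr (lt_trans (Finset.mem_range.mp hk) (by omega)))
  · intro n x hx
    simp only [mem_iInter]
    intro k _
    apply hW₀1
    simp only [mem_setOf_eq, hA' x hx]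
    positivity
  · intro n x hx
    simp only [mem_iInter] at hx
    have := hW₀2 n (hx n (Finset.mem_range.mpr (by omega)))
    simp only [mem_setOf_eq] at this
    by_contra hxG
    have h1 : h' x = 1 := hB' x hxG
    rw [h1] at this
    have : (1:ℝ)/(n+2) ≤ 1 := by
      apply div_le_one_of_le₀ <;> push_cast <;> linarith
    linarith
  · apply Subset.antisymm
    · intro x hx
      simp only [mem_iInter]
      intro n k _
      apply hW₀1
      simp only [mem_setOf_eq, hA' x hx]
      positivity
    · intro x hx
      simp only [mem_iInter] at hx
      apply hZ' x
      by_contra hpos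
      push_neg at hpos
      obtain ⟨n, hn⟩ := exists_nat_one_div_lt hpos
      have := hW₀2 n (hx n n (Finset.mem_range.mpr (by omega)))
      simp only [mem_setOf_eq] at this
      have h2 : (1:ℝ)/(n+2) ≤ 1/(n+1) := by
        apply one_div_le_one_div_of_le <;> push_cast <;> linarith
      push_cast at hn
      linarith

end Basics

section Families

variable {X : Type*} [TopologicalSpace X]

lemma IsDiscreteFamily.mono {ι : Type*} {U V : ι → Set X} (h : IsDiscreteFamily U)
    (hVU : ∀ i, V i ⊆ U i) : IsDiscreteFamily V := by
  intro x
  obtain ⟨W, hW, hsub⟩ := h x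
  refine ⟨W, hW, fun i hi j hj => hsub ?_ ?_⟩
  · obtain ⟨y, hy1, hy2⟩ := hi; exact ⟨y, hVU i hy1, hy2⟩
  · obtain ⟨y, hy1, hy2⟩ := hj; exact ⟨y, hVU j hy1, hy2⟩

lemma IsDiscreteFamily.locallyFinite {ι : Type*} {U : ι → Set X} (h : IsDiscreteFamily U) :
    LocallyFinite U := by
  intro x
  obtain ⟨W, hW, hsub⟩ := h x
  exact ⟨W, hW, hsub.finite⟩

lemma IsDiscreteFamily.disjoint {ι : Type*} {U : ι → Set X} (h : IsDiscreteFamily U)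
    {i j : ι} (hij : i ≠ j) {x : X} (hi : x ∈ U i) (hj : x ∈ U j) : False := by
  obtain ⟨W, hW, hsub⟩ := h x
  have hxW : x ∈ W := mem_of_mem_nhds hW
  exact hij (hsub ⟨x, hi, hxW⟩ ⟨x, hj, hxW⟩)

lemma IsDiscreteFamily.preimage {Y : Type*} [TopologicalSpace Y] {ι : Type*} {U : ι → Set Y}
    (h : IsDiscreteFamily U) {g : X → Y} (hg : Continuous g) :
    IsDiscreteFamily (fun i => g ⁻¹' U i) := by
  intro x
  obtain ⟨W, hW, hsub⟩ := h (g x)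
  refine ⟨g ⁻¹' W, hg.continuousAt.preimage_mem_nhds hW, fun i hi j hj => hsub ?_ ?_⟩
  · obtain ⟨y, hy1, hy2⟩ := hi; exact ⟨g y, hy1, hy2⟩
  · obtain ⟨y, hy1, hy2⟩ := hj; exact ⟨g y, hy1, hy2⟩

lemma IsDiscreteFamily.comp {ι κ : Type*} {U : ι → Set X} (h : IsDiscreteFamily U)
    {e : κ → ι} (he : Function.Injective e) : IsDiscreteFamily (fun k => U (e k)) := by
  intro x
  obtain ⟨W, hW, hsub⟩ := h x
  exact ⟨W, hW, fun i hi j hj => he (hsub hi hj)⟩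

lemma IsDiscreteFamily.isClosed_iUnion {ι : Type*} {U : ι → Set X} (h : IsDiscreteFamily U)
    (hcl : ∀ i, IsClosed (U i)) : IsClosed (⋃ i, U i) :=
  h.locallyFinite.isClosed_iUnion hcl

/-- Union of a subfamily of a discrete family of clopen sets is clopen. -/
lemma IsDiscreteFamily.isClopen_biUnion {ι : Type*} {U : ι → Set X} (h : IsDiscreteFamily U)
    (hcl : ∀ i, IsClopen (U i)) (s : Set ι) : IsClopen (⋃ i ∈ s, U i) := by
  constructor
  · have : (⋃ i ∈ s, U i) = ⋃ i : s, U i := by simp [iUnion_subtype]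
    rw [this]
    exact (h.comp Subtype.val_injective).isClosed_iUnion (fun i => (hcl i).isClosed)
  · exact isOpen_biUnion (fun i _ => (hcl i).isOpen)

/-- The pairing of two discrete families (by intersections) is discrete. -/
lemma IsDiscreteFamily.inter {ι κ : Type*} {U : ι → Set X} {V : κ → Set X}
    (hU : IsDiscreteFamily U) (hV : IsDiscreteFamily V) :
    IsDiscreteFamily (fun p : ι × κ => U p.1 ∩ V p.2) := by
  intro x
  obtain ⟨W1, hW1, hs1⟩ := hU x
  obtain ⟨W2, hW2, hs2⟩ := hV x
  refine ⟨W1 ∩ W2, inter_mem hW1 hW2, ?_⟩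
  rintro ⟨i, k⟩ hik ⟨j, l⟩ hjl
  obtain ⟨y, hy1, hy2⟩ := hik
  obtain ⟨z, hz1, hz2⟩ := hjl
  have h1 : i = j := hs1 ⟨y, hy1.1, hy2.1⟩ ⟨z, hz1.1, hz2.1⟩
  have h2 : k = l := hs2 ⟨y, hy1.2, hy2.2⟩ ⟨z, hz1.2, hz2.2⟩
  simp [h1, h2]

lemma IsSFDFamily.isSFDSetFamily_range {ι : Type*} {A : ι → Set X} (h : IsSFDFamily A) :
    IsSFDSetFamily (Set.range A) := by
  classical
  obtain ⟨U, hU, hcoz, hcl⟩ := h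
  have hsel : ∀ B : Set.range A, ∃ i, A i = (B : Set X) := fun B => B.2
  choose sel hsel using hsel
  refine ⟨fun B => U (sel B), ?_, fun B => hcoz _, fun B => ?_⟩
  · intro x
    obtain ⟨W, hW, hsub⟩ := hU x
    refine ⟨W, hW, fun B hB C hC => ?_⟩
    have : sel B = sel C := hsub hB hC
    ext1
    rw [← hsel B, ← hsel C, this]
  · show closure (B : Set X) ⊆ U (sel B)
    rw [show (B : Set X) = A (sel B) from (hsel B).symm]
    exact hcl _

lemma isSFDSetFamily_of_subsingleton {𝓐 : Set (Set X)} (h : 𝓐.Subsingleton) :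
    IsSFDSetFamily 𝓐 := by
  refine ⟨fun _ => univ, ?_, fun _ => isCozeroSet_univ, fun _ => subset_univ _⟩
  intro x
  refine ⟨univ, univ_mem, ?_⟩
  intro B _ C _
  exact Subtype.ext (h B.2 C.2)

lemma memSigmaF_of_countable_base {Y : Type*} [TopologicalSpace Y] {f : X → Y}
    (T : ℕ → Set X) (hbase : IsBaseFor (Set.range T) f) : MemSigmaF f := by
  refine ⟨fun n => {T n}, fun n => isSFDSetFamily_of_subsingleton subsingleton_singleton, ?_⟩
  have : (⋃ n, ({T n} : Set (Set X))) = Set.range T := by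
    ext B; simp [eq_comm]
  rwa [this]

lemma FunctionallyFSigma.of_zero {A : Set X} (h : IsZeroSet A) : FunctionallyFSigma A :=
  ⟨fun _ => A, fun _ => h, (iUnion_const A).symm⟩

lemma FunctionallyFSigma.of_cozero {A : Set X} (h : IsCozeroSet A) : FunctionallyFSigma A := by
  obtain ⟨Z, hZ, _, hA⟩ := h.exists_zero_seq
  exact ⟨Z, hZ, hA⟩

lemma functionallyFSigma_empty : FunctionallyFSigma (∅ : Set X) :=
  FunctionallyFSigma.of_zero isZeroSet_empty

lemma functionallyFSigma_univ : FunctionallyFSigma (univ : Set X) :=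
  FunctionallyFSigma.of_zero isZeroSet_univ

end Families

section Necessity

variable {X Y : Type*} [TopologicalSpace X] [TopologicalSpace Y]

lemma almostSZD_of_forall
    (hY : ∃ U V : Set Y, IsClopen U ∧ IsClopen V ∧ U.Nonempty ∧ V.Nonempty ∧
      Disjoint U V ∧ U ∪ V = Set.univ)
    (H : ∀ f : X → Y, (MemK1 f ∧ MemSigmaF f) ↔ MemB1 f) :
    AlmostStronglyZeroDimensional X := by
  classical
  obtain ⟨U, V, hU, hV, ⟨u, hu⟩, ⟨v, hv⟩, hdisj, hcover⟩ := hY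
  intro Z hZ
  have hZc : IsCozeroSet Zᶜ := by rw [IsCozeroSet, compl_compl]; exact hZ
  obtain ⟨Zn, hZn, _, hZceq⟩ := hZc.exists_zero_seq
  set f : X → Y := fun x => if x ∈ Z then u else v with hf
  have hfmem : ∀ (W : Set Y) (x : X), f x ∈ W ↔ ((x ∈ Z ∧ u ∈ W) ∨ (x ∉ Z ∧ v ∈ W)) := by
    intro W x
    by_cases hx : x ∈ Z <;> simp [hf, hx]
  have hpre : ∀ W : Set Y, f ⁻¹' W = ∅ ∨ f ⁻¹' W = Z ∨ f ⁻¹' W = Zᶜ ∨ f ⁻¹' W = univ := by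
    intro W
    by_cases h1 : u ∈ W <;> by_cases h2 : v ∈ W
    · right; right; right; ext x; simp [hfmem W x, h1, h2, em]
    · right; left; ext x
      simp only [mem_preimage, hfmem W x, h1, h2]
      tauto
    · right; right; left; ext x
      simp only [mem_preimage, hfmem W x, h1, h2, mem_compl_iff]
      tauto
    · left; ext x; simp [hfmem W x, h1, h2]
  have hK1 : MemK1 f := by
    intro W _
    rcases hpre W with h | h | h | h <;> rw [h]
    · exact functionallyFSigma_empty
    · exact FunctionallyFSigma.of_zero hZ
    · exact FunctionallyFSigma.of_cozero hZc
    · exact functionallyFSigma_univ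
  have hSig : MemSigmaF f := by
    refine memSigmaF_of_countable_base (fun n => Nat.rec Z (fun m _ => Zn m) n) ?_
    intro W _
    rcases hpre W with h | h | h | h <;> rw [h]
    · exact ⟨∅, empty_subset _, by simp⟩
    · refine ⟨{Z}, ?_, by simp⟩
      rintro B rfl
      exact ⟨0, rfl⟩
    · refine ⟨Set.range Zn, ?_, ?_⟩
      · rintro B ⟨m, rfl⟩; exact ⟨m + 1, rfl⟩
      · rw [hZceq]; ext x; simp [mem_sUnion]
    · refine ⟨Set.range (fun n => Nat.rec Z (fun m _ => Zn m) n), subset_rfl, ?_⟩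
      apply Subset.antisymm
      · intro x _
        by_cases hx : x ∈ Z
        · exact ⟨Z, ⟨0, rfl⟩, hx⟩
        · have : x ∈ Zᶜ := hx
          rw [hZceq] at this
          obtain ⟨m, hm⟩ := mem_iUnion.mp this
          exact ⟨Zn m, ⟨m + 1, rfl⟩, hm⟩
      · exact subset_univ _
  obtain ⟨g, hg, hlim⟩ := (H f).mp ⟨hK1, hSig⟩
  refine ⟨fun N => ⋂ k, (g (N + k)) ⁻¹' U,
    fun N => ⟨fun k => (g (N + k)) ⁻¹' U, fun k => hU.preimage (hg _), rfl⟩, ?_⟩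
  apply Subset.antisymm
  · intro x hx
    have hfx : f x ∈ U := by rw [hf]; simp [hx, hu]
    have hev : ∀ᶠ n in atTop, g n x ∈ U := (hlim x).eventually_mem (hU.isOpen.mem_nhds hfx)
    obtain ⟨N, hN⟩ := eventually_atTop.mp hev
    exact mem_iUnion.mpr ⟨N, mem_iInter.mpr (fun k => hN (N + k) (Nat.le_add_right N k))⟩
  · intro x hx
    obtain ⟨N, hN⟩ := mem_iUnion.mp hx
    have hev : ∀ᶠ n in atTop, g n x ∈ U := by
      rw [eventually_atTop]
      refine ⟨N, fun n hn => ?_⟩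
      have := mem_iInter.mp hN (n - N)
      rwa [Nat.add_sub_cancel' hn] at this
    have hcl : f x ∈ closure U := mem_closure_of_tendsto (hlim x) hev
    rw [hU.isClosed.closure_eq] at hcl
    by_contra hxZ
    have : f x = v := by rw [hf]; simp [hxZ]
    rw [this] at hcl
    exact (disjoint_left.mp hdisj hcl) hv

/-- Countably compact case: almost strongly zero-dimensional implies strongly
zero-dimensional. -/
lemma szd_of_cc (hcc : CountablyCompactIn (Set.univ : Set X))
    (ha : AlmostStronglyZeroDimensional X) : StronglyZeroDimensional X := by
  intro A B ⟨h, hc, hmem, hA, hB⟩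
  -- O := {h < 1/2} is cozero hence a countable union of C-sets
  have hO : IsCozeroSet {x | h x < 1/2} := isCozeroSet_lt hc _
  obtain ⟨Zn, hZn, _, hOeq⟩ := hO.exists_zero_seq
  have hCS : ∀ n, IsCSigmaSet (Zn n) := fun n => ha _ (hZn n)
  -- flatten: {h < 1/2} is a countable union of C-sets
  have : ∃ C : ℕ → Set X, (∀ n, IsCSet (C n)) ∧ {x | h x < 1/2} = ⋃ n, C n := by
    choose D hD hDeq using hCS
    refine ⟨fun n => D (Nat.unpair n).1 (Nat.unpair n).2, fun n => hD _ _, ?_⟩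
    rw [hOeq]
    apply Subset.antisymm
    · intro x hx
      obtain ⟨n, hn⟩ := mem_iUnion.mp hx
      rw [hDeq n] at hn
      obtain ⟨m, hm⟩ := mem_iUnion.mp hn
      exact mem_iUnion.mpr ⟨Nat.pair n m, by rwa [Nat.unpair_pair]⟩
    · intro x hx
      obtain ⟨n, hn⟩ := mem_iUnion.mp hx
      exact mem_iUnion.mpr ⟨(Nat.unpair n).1, by rw [hDeq]; exact mem_iUnion.mpr ⟨_, hn⟩⟩
  obtain ⟨C, hC, hOC⟩ := this
  -- decreasing clopen sequences
  have hC' : ∀ n, ∃ W : ℕ → Set X, (∀ k, IsClopen (W k)) ∧ (∀ k l, k ≤ l → W l ⊆ W k) ∧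
      C n = ⋂ k, W k := by
    intro n
    obtain ⟨W, hW, hWeq⟩ := hC n
    refine ⟨fun k => ⋂ j ∈ Finset.range (k+1), W j, fun k =>
      isClopen_biInter_finset (fun j _ => hW j), ?_, ?_⟩
    · intro k l hkl x hx
      simp only [mem_iInter] at hx ⊢
      intro j hj
      exact hx j (Finset.mem_range.mpr (lt_of_lt_of_le (Finset.mem_range.mp hj) (by omega)))
    · rw [hWeq]
      apply Subset.antisymm
      · intro x hx
        simp only [mem_iInter] at hx ⊢
        intro k j _
        exact hx j
      · intro x hx
        simp only [mem_iInter] at hx ⊢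
        intro k
        exact hx k k (Finset.mem_range.mpr (by omega))
  choose W hWclopen hWmono hWeq using hC'
  set Z₂ : Set X := {x | 3/4 ≤ h x} with hZ₂
  have hZ₂closed : IsClosed Z₂ := isClosed_le continuous_const hc
  -- for each n there is k with W n k ∩ Z₂ = ∅
  have hkey : ∀ n, ∃ k, W n k ∩ Z₂ = ∅ := by
    intro n
    have hempty : (⋂ k, W n k ∩ Z₂) = ∅ := by
      rw [← iInter_inter, ← hWeq]
      ext x
      simp only [mem_inter_iff, mem_empty_iff_false, iff_false, not_and]
      intro hx hx2
      have hxO : x ∈ {x | h x < 1/2} := by rw [hOC]; exact mem_iUnion.mpr ⟨n, hx⟩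
      simp only [mem_setOf_eq] at hxO
      simp only [hZ₂, mem_setOf_eq] at hx2
      linarith
    have hcov : univ ⊆ ⋃ k, (W n k ∩ Z₂)ᶜ := by
      intro x _
      by_contra hx
      simp only [mem_iUnion, mem_compl_iff, not_exists, not_not] at hx
      have : x ∈ (⋂ k, W n k ∩ Z₂) := mem_iInter.mpr hx
      rw [hempty] at this
      exact this
    obtain ⟨t, ht⟩ := hcc (fun k => (W n k ∩ Z₂)ᶜ)
      (fun k => (((hWclopen n k).isClosed.inter hZ₂closed)).isOpen_compl) hcov
    rcases t.eq_empty_or_nonempty with rfl | htne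
    · refine ⟨0, ?_⟩
      ext x
      simp only [mem_inter_iff, mem_empty_iff_false, iff_false, not_and]
      intro hx hx2
      have := ht (mem_univ x)
      simp at this
    · set k₀ := t.max' htne
      refine ⟨k₀, ?_⟩
      ext x
      simp only [mem_inter_iff, mem_empty_iff_false, iff_false, not_and]
      intro hx hx2
      obtain ⟨k, hk, hxk⟩ := mem_iUnion₂.mp (ht (mem_univ x))
      exact hxk ⟨hWmono n k k₀ (t.le_max' k hk) hx, hx2⟩
  choose k hk using hkey
  set Z₁ : Set X := {x | h x ≤ 1/3} with hZ₁
  have hZ₁sub : Z₁ ⊆ ⋃ n, W n (k n) := by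
    intro x hx
    simp only [hZ₁, mem_setOf_eq] at hx
    have : x ∈ {x | h x < 1/2} := by
      simp only [mem_setOf_eq]; linarith
    rw [hOC] at this
    obtain ⟨n, hn⟩ := mem_iUnion.mp this
    refine mem_iUnion.mpr ⟨n, ?_⟩
    rw [hWeq] at hn
    exact mem_iInter.mp hn (k n)
  have hcov : univ ⊆ ⋃ m, (fun m => Nat.rec Z₁ᶜ (fun n _ => W n (k n)) m) m := by
    intro x _
    by_cases hx : x ∈ Z₁
    · obtain ⟨n, hn⟩ := mem_iUnion.mp (hZ₁sub hx)
      exact mem_iUnion.mpr ⟨n + 1, hn⟩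
    · exact mem_iUnion.mpr ⟨0, hx⟩
  obtain ⟨t, ht⟩ := hcc _ (fun m => by
    cases m with
    | zero => exact (isClosed_le hc continuous_const).isOpen_compl
    | succ n => exact (hWclopen n (k n)).isOpen) hcov
  refine ⟨⋃ n ∈ t.image Nat.pred, W n (k n), ?_, ?_, ?_⟩
  · exact isClopen_biUnion_finset (fun n _ => hWclopen n (k n))
  · intro x hxA
    have hxZ₁ : x ∈ Z₁ := by
      simp only [hZ₁, mem_setOf_eq, hA x hxA]; norm_num
    obtain ⟨m, hm, hxm⟩ := mem_iUnion₂.mp (ht (mem_univ x))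
    cases m with
    | zero => exact absurd hxZ₁ hxm
    | succ n =>
        exact mem_iUnion₂.mpr ⟨n, Finset.mem_image.mpr ⟨n+1, hm, rfl⟩, hxm⟩
  · intro x hx
    obtain ⟨n, _, hxn⟩ := mem_iUnion₂.mp hx
    intro hxB
    have hx2 : x ∈ Z₂ := by
      simp only [hZ₂, mem_setOf_eq, hB x hxB]; norm_num
    have := hk n
    rw [eq_empty_iff_forall_notMem] at this
    exact this x ⟨hxn, hx2⟩

end Necessity

section LocallyCompact

variable {X : Type*} [TopologicalSpace X]

lemma LocallyFinite.isClopen_sUnion' {ι : Type*} {f : ι → Set X} (hf : LocallyFinite f)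
    (hcl : ∀ i, IsClopen (f i)) (s : Set ι) : IsClopen (⋃ i ∈ s, f i) := by
  constructor
  · have : (⋃ i ∈ s, f i) = ⋃ i : s, f i := by simp [iUnion_subtype]
    rw [this]
    refine LocallyFinite.isClosed_iUnion ?_ (fun i => (hcl i).isClosed)
    intro x
    obtain ⟨t, ht, hfin⟩ := hf x
    refine ⟨t, ht, ?_⟩
    exact (hfin.preimage (Subtype.val_injective.injOn)).subset (fun i hi => hi)
  · exact isOpen_biUnion (fun i _ => (hcl i).isOpen)

/-- Connected subsets of an almost strongly zero-dimensional, locally compact Hausdorff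
space are subsingletons. -/
lemma preconnected_subsingleton_of_almost [LocallyCompactSpace X] [T2Space X]
    (ha : AlmostStronglyZeroDimensional X) {S : Set X} (hS : IsPreconnected S) :
    S.Subsingleton := by
  intro x hx y hy
  by_contra hxy
  obtain ⟨φ, hφ1, hφ0, _, hφmem⟩ := exists_continuous_one_zero_of_isCompact
    (isCompact_singleton : IsCompact {x}) (isClosed_singleton : IsClosed ({y} : Set X))
    (by simp [disjoint_singleton, hxy])
  have hZ : IsZeroSet {z | 1/2 ≤ φ z} := isZeroSet_ge φ.continuous _
  obtain ⟨C, hC, hCeq⟩ := ha _ hZ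
  have hxZ : x ∈ {z | 1/2 ≤ φ z} := by
    have : φ x = 1 := hφ1 rfl
    simp only [mem_setOf_eq, this]
    norm_num
  rw [hCeq] at hxZ
  obtain ⟨n, hn⟩ := mem_iUnion.mp hxZ
  obtain ⟨W, hW, hWeq⟩ := hC n
  have hyC : y ∈ C n := by
    rw [hWeq]
    refine mem_iInter.mpr (fun k => ?_)
    have hsub : S ⊆ W k := by
      refine hS.subset_isClopen (hW k) ⟨x, hx, ?_⟩
      rw [hWeq] at hn
      exact mem_iInter.mp hn k
    exact hsub hy
  have hyZ : y ∈ {z | 1/2 ≤ φ z} := by rw [hCeq]; exact mem_iUnion.mpr ⟨n, hyC⟩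
  have : φ y = 0 := hφ0 rfl
  simp only [mem_setOf_eq, this] at hyZ
  linarith

/-- In an almost strongly zero-dimensional locally compact Hausdorff space, every point
has a neighbourhood base of compact clopen sets. -/
lemma clopen_base_of_almost [LocallyCompactSpace X] [T2Space X]
    (ha : AlmostStronglyZeroDimensional X) {x : X} {O : Set X} (hO : IsOpen O) (hxO : x ∈ O) :
    ∃ W : Set X, IsClopen W ∧ IsCompact W ∧ x ∈ W ∧ W ⊆ O := by
  obtain ⟨K, hK, hxint, hKO⟩ := exists_compact_subset hO hxO
  haveI : CompactSpace K := isCompact_iff_compactSpace.mp hK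
  set x' : K := ⟨x, interior_subset hxint⟩ with hx'
  have hcc : connectedComponent x' = ⋂ s : {s : Set K // IsClopen s ∧ x' ∈ s}, (s : Set K) :=
    connectedComponent_eq_iInter_isClopen x'
  have hsub : connectedComponent x' ⊆ Subtype.val ⁻¹' (interior K) := by
    have hconn : IsPreconnected ((Subtype.val : K → X) '' connectedComponent x') :=
      isConnected_connectedComponent.isPreconnected.image _ continuous_subtype_val.continuousOn
    have hss : ((Subtype.val : K → X) '' connectedComponent x').Subsingleton :=
      preconnected_subsingleton_of_almost ha hconn
    intro z hz
    have hzx : (z : X) = x :=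
      hss (mem_image_of_mem _ hz) (mem_image_of_mem _ mem_connectedComponent)
    simp only [mem_preimage, hzx]
    exact hxint
  rw [hcc] at hsub
  -- compactness: finitely many clopen sets suffice
  have hcompl : (Subtype.val ⁻¹' (interior K))ᶜ ⊆
      ⋃ s : {s : Set K // IsClopen s ∧ x' ∈ s}, ((s : Set K))ᶜ := by
    intro z hz
    simp only [mem_compl_iff] at hz
    by_contra hzn
    simp only [mem_iUnion, mem_compl_iff, not_exists, not_not] at hzn
    exact hz (hsub (mem_iInter.mpr hzn))
  have hcpt : IsCompact (Subtype.val ⁻¹' (interior K) : Set K)ᶜ :=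
    (isClosed_compl_iff.mpr (isOpen_interior.preimage continuous_subtype_val)).isCompact
  obtain ⟨t, ht⟩ := hcpt.elim_finite_subcover _
    (fun s : {s : Set K // IsClopen s ∧ x' ∈ s} => (s.2.1.compl).isOpen) hcompl
  set W' : Set K := (⋂ s ∈ t, (s : Set K)) ∩ Subtype.val ⁻¹' (interior K) with hW'
  have hW'clopen : IsClopen (⋂ s ∈ t, (s : Set K)) :=
    isClopen_biInter_finset (fun s _ => s.2.1)
  have hW'sub : (⋂ s ∈ t, (s : Set K)) ⊆ Subtype.val ⁻¹' (interior K) := by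
    intro z hz
    by_contra hzn
    obtain ⟨s, hs, hzs⟩ := mem_iUnion₂.mp (ht hzn)
    exact hzs (mem_iInter₂.mp hz s hs)
  have hW'eq : W' = ⋂ s ∈ t, (s : Set K) := by
    rw [hW']; exact inter_eq_left.mpr hW'sub
  -- push forward to X
  refine ⟨Subtype.val '' (⋂ s ∈ t, (s : Set K)), ⟨?_, ?_⟩, ?_, ?_, ?_⟩
  · -- closed
    have : IsCompact (Subtype.val '' (⋂ s ∈ t, (s : Set K))) :=
      (hW'clopen.isClosed.isCompact).image continuous_subtype_val
    exact this.isClosed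
  · -- open
    obtain ⟨U, hU, hUeq⟩ := isOpen_induced_iff.mp hW'clopen.isOpen
    have himg : Subtype.val '' (⋂ s ∈ t, (s : Set K)) = U ∩ interior K := by
      apply Subset.antisymm
      · rintro _ ⟨z, hz, rfl⟩
        refine ⟨?_, hW'sub hz⟩
        have : z ∈ Subtype.val ⁻¹' U := by rw [hUeq]; exact hz
        exact this
      · rintro z ⟨hzU, hzK⟩
        refine ⟨⟨z, interior_subset hzK⟩, ?_, rfl⟩
        rw [← hUeq]
        exact hzU
    rw [himg]
    exact hU.inter isOpen_interior
  · exact hW'clopen.isClosed.isCompact.image continuous_subtype_val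
  · exact ⟨x', mem_iInter₂.mpr (fun s _ => s.2.2), rfl⟩
  · rintro _ ⟨z, _, rfl⟩
    exact hKO z.2

lemma szd_of_lc [LocallyCompactSpace X] [ParacompactSpace X] [T2Space X]
    (ha : AlmostStronglyZeroDimensional X) : StronglyZeroDimensional X := by
  classical
  intro A B ⟨h, hc, hmem, hA, hB⟩
  set O₁ : Set X := {x | h x < 3/4} with hO₁
  set O₂ : Set X := {x | 1/4 < h x} with hO₂
  have hO₁open : IsOpen O₁ := isOpen_lt hc continuous_const
  have hO₂open : IsOpen O₂ := isOpen_lt continuous_const hc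
  set ι := {W : Set X // IsClopen W ∧ IsCompact W ∧ (W ⊆ O₁ ∨ W ⊆ O₂)} with hι
  have hcov : ⋃ i : ι, (i : Set X) = univ := by
    apply eq_univ_of_forall
    intro x
    have : x ∈ O₁ ∨ x ∈ O₂ := by
      rcases lt_or_ge (h x) (3/4 : ℝ) with h1 | h1
      · left; exact h1
      · right; simp only [hO₂, mem_setOf_eq]; linarith
    rcases this with hx | hx
    · obtain ⟨W, hW, hWc, hxW, hWO⟩ := clopen_base_of_almost ha hO₁open hx
      exact mem_iUnion.mpr ⟨⟨W, hW, hWc, Or.inl hWO⟩, hxW⟩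
    · obtain ⟨W, hW, hWc, hxW, hWO⟩ := clopen_base_of_almost ha hO₂open hx
      exact mem_iUnion.mpr ⟨⟨W, hW, hWc, Or.inr hWO⟩, hxW⟩
  obtain ⟨v, hvopen, hvcov, hvlf, hvsub⟩ :=
    precise_refinement (fun i : ι => (i : Set X)) (fun i => i.2.1.isOpen) hcov
  obtain ⟨v', hv'cov, hv'open, hv'cl⟩ := exists_subset_iUnion_closure_subset
    (isClosed_univ) hvopen (fun x _ => hvlf.point_finite x) (le_of_eq hvcov.symm)
  -- compact clopen sets between closure (v' i) and v i
  have hstep : ∀ i : ι, ∃ G : Set X, IsClopen G ∧ closure (v' i) ⊆ G ∧ G ⊆ v i := by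
    intro i
    have hnbhd : ∀ z : closure (v' i), ∃ S : Set X, IsClopen S ∧ (z : X) ∈ S ∧ S ⊆ v i := by
      intro z
      obtain ⟨S, hS, _, hzS, hSsub⟩ := clopen_base_of_almost ha (hvopen i) (hv'cl i z.2)
      exact ⟨S, hS, hzS, hSsub⟩
    choose S hSclopen hSmem hSsub using hnbhd
    have hFcpt : IsCompact (closure (v' i)) :=
      IsCompact.of_isClosed_subset i.2.2.1 isClosed_closure
        ((hv'cl i).trans (hvsub i))
    have hcover : closure (v' i) ⊆ ⋃ z : closure (v' i), S z := by
      intro z hz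
      exact mem_iUnion.mpr ⟨⟨z, hz⟩, hSmem ⟨z, hz⟩⟩
    obtain ⟨t, ht⟩ := hFcpt.elim_finite_subcover S (fun z => (hSclopen z).isOpen) hcover
    refine ⟨⋃ z ∈ t, S z, isClopen_biUnion_finset (fun z _ => hSclopen z), ht, ?_⟩
    intro w hw
    obtain ⟨z, _, hwz⟩ := mem_iUnion₂.mp hw
    exact hSsub z hwz
  choose G hGclopen hGsub1 hGsub2 using hstep
  have hGlf : LocallyFinite G := hvlf.subset hGsub2
  have hGcov : ∀ x : X, ∃ i, x ∈ G i := by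
    intro x
    have : x ∈ ⋃ i, v' i := hv'cov (mem_univ x)
    obtain ⟨i, hi⟩ := mem_iUnion.mp this
    exact ⟨i, hGsub1 i (subset_closure hi)⟩
  -- disjointify via a well-order
  have hwo : IsWellOrder ι WellOrderingRel := WellOrderingRel.isWellOrder
  set E : ι → Set X := fun i => G i \ ⋃ j ∈ {j | WellOrderingRel j i}, G j with hE
  have hEclopen : ∀ i, IsClopen (E i) := by
    intro i
    exact (hGclopen i).diff (hGlf.isClopen_sUnion' hGclopen _)
  have hEsub : ∀ i, E i ⊆ G i := fun i => diff_subset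
  -- every point is in exactly the minimal one
  have hEcov : ∀ x : X, ∃ i, x ∈ E i := by
    intro x
    have hne : {i | x ∈ G i}.Nonempty := hGcov x
    set i₀ := hwo.wf.min _ hne
    refine ⟨i₀, hwo.wf.min_mem _ hne, ?_⟩
    intro hx
    obtain ⟨j, hj, hxj⟩ := mem_iUnion₂.mp hx
    exact hwo.wf.not_lt_min _ hxj hj
  set marked : Set ι := {i | (i : Set X) ⊆ O₁} with hmarked
  refine ⟨⋃ i ∈ marked, E i, hGlf.subset hEsub |>.isClopen_sUnion' hEclopen _, ?_, ?_⟩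
  · intro x hxA
    obtain ⟨i, hxi⟩ := hEcov x
    have hiO : (i : Set X) ⊆ O₁ ∨ (i : Set X) ⊆ O₂ := i.2.2.2
    have hx_in_i : x ∈ (i : Set X) := hvsub i (hGsub2 i (hEsub i hxi))
    rcases hiO with hi | hi
    · exact mem_iUnion₂.mpr ⟨i, hi, hxi⟩
    · exfalso
      have := hi hx_in_i
      simp only [hO₂, mem_setOf_eq, hA x hxA] at this
      linarith
  · intro x hx hxB
    obtain ⟨i, hi, hxi⟩ := mem_iUnion₂.mp hx
    have : x ∈ O₁ := hi (hvsub i (hGsub2 i (hEsub i hxi)))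
    simp only [hO₁, mem_setOf_eq, hB x hxB] at this
    linarith

end LocallyCompact

section B1K1

variable {X : Type*} [TopologicalSpace X] {Y : Type*} [MetricSpace Y]

lemma memK1_of_memB1 {f : X → Y} (hf : MemB1 f) : MemK1 f := by
  obtain ⟨g, hg, hlim⟩ := hf
  intro V hV
  set S : ℕ → Set Y := fun m => {y | ∀ z, z ∉ V → 1/(m+1 : ℝ) ≤ dist y z} with hS
  have hSclosed : ∀ m, IsClosed (S m) := by
    intro m
    have : S m = ⋂ z ∈ Vᶜ, {y | 1/(m+1 : ℝ) ≤ dist y z} := by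
      ext y; simp [hS, mem_iInter]
    rw [this]
    exact isClosed_biInter (fun z _ => isClosed_le continuous_const (continuous_id.dist continuous_const))
  have hSV : ∀ m, S m ⊆ V := by
    intro m y hy
    by_contra hyV
    have := hy y hyV
    simp only [dist_self] at this
    have : (0:ℝ) < 1/(m+1) := by positivity
    linarith
  set Z : ℕ → ℕ → Set X := fun m N => ⋂ k, (g (N + k)) ⁻¹' (S m) with hZdef
  have hZzero : ∀ m N, IsZeroSet (Z m N) :=
    fun m N => isZeroSet_iInter (fun k => ((hSclosed m).isZeroSet).preimage (hg (N+k)))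
  refine ⟨fun p => Z (Nat.unpair p).1 (Nat.unpair p).2, fun p => hZzero _ _, ?_⟩
  apply Subset.antisymm
  · intro x hx
    obtain ⟨ε, hε, hball⟩ := Metric.isOpen_iff.mp hV (f x) hx
    obtain ⟨m, hm⟩ := exists_nat_one_div_lt (by linarith : (0:ℝ) < ε/2)
    have hev : ∀ᶠ n in atTop, dist (g n x) (f x) < ε/2 :=
      (hlim x).eventually_mem (Metric.ball_mem_nhds _ (by linarith))
    obtain ⟨N, hN⟩ := eventually_atTop.mp hev
    refine mem_iUnion.mpr ⟨Nat.pair m N, ?_⟩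
    rw [Nat.unpair_pair]
    refine mem_iInter.mpr (fun k => ?_)
    intro z hz
    have h1 : ε ≤ dist (f x) z := by
      by_contra hlt
      push_neg at hlt
      exact hz (hball (by rwa [Metric.mem_ball, dist_comm]))
    have h2 : dist (g (N+k) x) (f x) < ε/2 := hN (N+k) (Nat.le_add_right N k)
    have h3 : dist (f x) z ≤ dist (f x) (g (N+k) x) + dist (g (N+k) x) z := dist_triangle _ _ _
    rw [dist_comm (f x) (g (N+k) x)] at h3
    push_cast
    push_cast at hm
    linarith
  · intro x hx
    obtain ⟨p, hp⟩ := mem_iUnion.mp hx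
    set m := (Nat.unpair p).1
    set N := (Nat.unpair p).2
    have hfS : f x ∈ S m := by
      intro z hz
      have htend : Tendsto (fun n => dist (g n x) z) atTop (𝓝 (dist (f x) z)) :=
        (hlim x).dist tendsto_const_nhds
      refine ge_of_tendsto htend ?_
      rw [eventually_atTop]
      refine ⟨N, fun n hn => ?_⟩
      have := mem_iInter.mp hp (n - N)
      rw [Nat.add_sub_cancel' hn] at this
      exact this z hz
    exact hSV m hfS

end B1K1

section Stone

variable {Y : Type*} [MetricSpace Y]

noncomputable def stoneV (ρ : ℕ → ℝ) (U : Y → Set Y) (sl : Y → Y) : ℕ → Y → Set Y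
  | n => fun s => ⋃ c ∈ {c : Y | sl c = s ∧ Metric.ball c (3 * ρ n) ⊆ U s ∧
      ∀ j, j < n → ∀ t, c ∉ stoneV ρ U sl j t}, Metric.ball c (ρ n)
  termination_by n => n

lemma mem_stoneV {ρ : ℕ → ℝ} {U : Y → Set Y} {sl : Y → Y} {n : ℕ} {s y : Y} :
    y ∈ stoneV ρ U sl n s ↔ ∃ c, (sl c = s ∧ Metric.ball c (3 * ρ n) ⊆ U s ∧
      ∀ j, j < n → ∀ t, c ∉ stoneV ρ U sl j t) ∧ y ∈ Metric.ball c (ρ n) := by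
  rw [stoneV]
  simp only [mem_iUnion, mem_setOf_eq, exists_prop]

lemma isOpen_stoneV {ρ : ℕ → ℝ} {U : Y → Set Y} {sl : Y → Y} {n : ℕ} {s : Y} :
    IsOpen (stoneV ρ U sl n s) := by
  rw [stoneV]
  exact isOpen_biUnion (fun c _ => Metric.isOpen_ball)

/-- Stone's construction: a σ-discrete (uniformly separated) open refinement of the cover
by `δ`-balls. -/
lemma stone_refinement {δ : ℝ} (hδ : 0 < δ) :
    ∃ (V : ℕ → Y → Set Y) (ρ : ℕ → ℝ),
      (∀ n, 0 < ρ n) ∧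
      (∀ n s, IsOpen (V n s)) ∧
      (∀ n s, V n s ⊆ Metric.ball s δ) ∧
      (∀ n s t, s ≠ t → ∀ y ∈ V n s, ∀ z ∈ V n t, ρ n < dist y z) ∧
      (∀ x : Y, ∃ n s, x ∈ V n s) := by
  classical
  have hwo : IsWellOrder Y WellOrderingRel := WellOrderingRel.isWellOrder
  set ρ : ℕ → ℝ := fun n => δ * (1/2)^(n+2) with hρ
  have hρpos : ∀ n, 0 < ρ n := fun n => by positivity
  set U : Y → Set Y := fun s => Metric.ball s δ with hU
  have hmem : ∀ c : Y, {s : Y | c ∈ U s}.Nonempty := fun c => ⟨c, Metric.mem_ball_self hδ⟩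
  set sl : Y → Y := fun c => hwo.wf.min {s : Y | c ∈ U s} (hmem c) with hsl
  have hsl_mem : ∀ c, c ∈ U (sl c) := fun c => hwo.wf.min_mem _ (hmem c)
  have hsl_min : ∀ c s, c ∈ U s → ¬ WellOrderingRel s (sl c) :=
    fun c s hs => hwo.wf.not_lt_min {s : Y | c ∈ U s} hs
  refine ⟨stoneV ρ U sl, ρ, hρpos, fun n s => isOpen_stoneV, ?_, ?_, ?_⟩
  · -- refinement
    intro n s y hy
    obtain ⟨c, ⟨hslc, hball, _⟩, hyc⟩ := mem_stoneV.mp hy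
    have : y ∈ Metric.ball c (3 * ρ n) := by
      refine Metric.mem_ball.mpr (lt_of_lt_of_le (Metric.mem_ball.mp hyc) ?_)
      nlinarith [hρpos n]
    exact hball this
  · -- separation
    intro n s t hst y hy z hz
    obtain ⟨c, ⟨hslc, hballc, _⟩, hyc⟩ := mem_stoneV.mp hy
    obtain ⟨d, ⟨hsld, hballd, _⟩, hzd⟩ := mem_stoneV.mp hz
    have hcd : 3 * ρ n ≤ dist c d := by
      rcases trichotomous_of WellOrderingRel s t with hlt | heq | hgt
      · -- s before t : d ∉ U s
        have hdUs : d ∉ U s := by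
          intro hd
          exact hsl_min d s hd (hsld ▸ hlt)
        by_contra hcon
        push_neg at hcon
        exact hdUs (hballc (Metric.mem_ball.mpr (by rwa [dist_comm])))
      · exact absurd heq hst
      · have hcUt : c ∉ U t := by
          intro hcm
          exact hsl_min c t hcm (hslc ▸ hgt)
        by_contra hcon
        push_neg at hcon
        exact hcUt (hballd (Metric.mem_ball.mpr (by rwa [dist_comm] at hcon ⊢)))
    have h1 : dist y c < ρ n := Metric.mem_ball.mp hyc
    have h2 : dist z d < ρ n := Metric.mem_ball.mp hzd
    have h3 : dist c d ≤ dist c y + dist y z + dist z d := dist_triangle4 _ _ _ _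
    rw [dist_comm c y] at h3
    linarith
  · -- covering
    intro x
    by_contra hx
    push_neg at hx
    set s := sl x
    have hxU : x ∈ U s := hsl_mem x
    obtain ⟨ε, hε, hball⟩ := Metric.isOpen_iff.mp Metric.isOpen_ball x hxU
    obtain ⟨n, hn⟩ : ∃ n : ℕ, 3 * ρ n < ε := by
      obtain ⟨n, hn⟩ := exists_pow_lt_of_lt_one (show (0:ℝ) < ε/(3*δ) by positivity)
        (by norm_num : (1/2 : ℝ) < 1)
      refine ⟨n, ?_⟩
      have h2 : (1/2:ℝ)^(n+2) ≤ (1/2)^n := by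
        apply pow_le_pow_of_le_one <;> norm_num
      have h3 : ρ n ≤ δ * (1/2)^n := by
        rw [hρ]
        exact mul_le_mul_of_nonneg_left h2 (le_of_lt hδ)
      have h4 : δ * (1/2)^n < δ * (ε/(3*δ)) := mul_lt_mul_of_pos_left hn hδ
      have h5 : δ * (ε/(3*δ)) = ε/3 := by field_simp
      nlinarith
    have hqual : x ∈ {c : Y | sl c = s ∧ Metric.ball c (3 * ρ n) ⊆ U s ∧
        ∀ j, j < n → ∀ t, c ∉ stoneV ρ U sl j t} := by
      refine ⟨rfl, fun z hz => hball (lt_trans (Metric.mem_ball.mp hz) hn), ?_⟩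
      intro j _ t
      exact hx j t
    exact hx n s (mem_stoneV.mpr ⟨x, hqual, Metric.mem_ball_self (hρpos n)⟩)

end Stone

section B1Sigma

variable {X : Type*} [TopologicalSpace X] {Y : Type*} [MetricSpace Y]

lemma memSigmaF_of_memB1 {f : X → Y} (hf : MemB1 f) : MemSigmaF f := by
  classical
  obtain ⟨g, hg, hlim⟩ := hf
  have hδ : ∀ q : ℕ, (0:ℝ) < (1/2)^q := fun q => by positivity
  choose V ρ hρpos hVopen hVball hVsep hVcov using fun q : ℕ => stone_refinement (Y := Y) (hδ q)
  set Sh : ℕ → ℕ → Y → ℕ → Set Y := fun q n s k =>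
    {y | ∀ z, z ∉ V q n s → 1/(k+1 : ℝ) ≤ dist y z} with hSh
  have hShV : ∀ q n s k, Sh q n s k ⊆ V q n s := by
    intro q n s k y hy
    by_contra hyV
    have := hy y hyV
    simp only [dist_self] at this
    have h0 : (0:ℝ) < 1/(k+1) := by positivity
    linarith
  set O : ℕ → ℕ → ℕ → Y → Set Y := fun q n k s =>
    ⋃ z ∈ Sh q n s k, Metric.ball z (ρ q n / 4) with hO
  set D : ℕ → ℕ → ℕ → Y → Set Y := fun q n k s =>
    {y | Metric.infDist y (Sh q n s k) ≤ ρ q n / 8} with hD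
  have hOopen : ∀ q n k s, IsOpen (O q n k s) :=
    fun q n k s => isOpen_biUnion (fun z _ => Metric.isOpen_ball)
  have hDclosed : ∀ q n k s, IsClosed (D q n k s) :=
    fun q n k s => isClosed_le (Metric.continuous_infDist_pt _) continuous_const
  have hDO : ∀ q n k s, (Sh q n s k).Nonempty → D q n k s ⊆ O q n k s := by
    intro q n k s hne y hy
    simp only [hD, mem_setOf_eq] at hy
    have : Metric.infDist y (Sh q n s k) < ρ q n / 4 :=
      lt_of_le_of_lt hy (by linarith [hρpos q n])
    obtain ⟨z, hz, hdz⟩ := (Metric.infDist_lt_iff hne).mp this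
    exact mem_biUnion hz (Metric.mem_ball.mpr (by rwa [dist_comm] at hdz ⊢))
  -- discreteness of the collars in Y
  have hOdisc : ∀ q n k, IsDiscreteFamily (fun s => O q n k s) := by
    intro q n k x
    refine ⟨Metric.ball x (ρ q n / 4), Metric.ball_mem_nhds _ (by linarith [hρpos q n]), ?_⟩
    intro s hs t ht
    by_contra hst
    obtain ⟨y, hyO, hyB⟩ := hs
    obtain ⟨y', hyO', hyB'⟩ := ht
    obtain ⟨z, hz, hyz⟩ := mem_iUnion₂.mp hyO
    obtain ⟨z', hz', hyz'⟩ := mem_iUnion₂.mp hyO'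
    have hsep := hVsep q n s t hst z (hShV q n s k hz) z' (hShV q n t k hz')
    have d1 : dist y z < ρ q n / 4 := Metric.mem_ball.mp hyz
    have d2 : dist y x < ρ q n / 4 := Metric.mem_ball.mp hyB
    have d3 : dist y' z' < ρ q n / 4 := Metric.mem_ball.mp hyz'
    have d4 : dist y' x < ρ q n / 4 := Metric.mem_ball.mp hyB'
    have : dist z z' ≤ dist z y + dist y x + dist x y' + dist y' z' := by
      calc dist z z' ≤ dist z x + dist x z' := dist_triangle _ _ _
        _ ≤ (dist z y + dist y x) + (dist x y' + dist y' z') := by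
            gcongr <;> exact dist_triangle _ _ _
        _ = dist z y + dist y x + dist x y' + dist y' z' := by ring
    rw [dist_comm z y, dist_comm x y'] at this
    linarith
  set A : ℕ → ℕ → ℕ → ℕ → Y → Set X := fun q n k N s =>
    f ⁻¹' (Sh q n s k) ∩ ⋂ r, (g (N + r)) ⁻¹' (D q n k s) with hA
  -- each family (A q n k N ·) is SFD
  have hSFD : ∀ q n k N, IsSFDFamily (fun s => A q n k N s) := by
    intro q n k N
    refine ⟨fun s => g N ⁻¹' (O q n k s), (hOdisc q n k).preimage (hg N),
      fun s => ((hOopen q n k s).isCozeroSet).preimage (hg N), ?_⟩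
    intro s
    rcases (Sh q n s k).eq_empty_or_nonempty with hemp | hne
    · have : A q n k N s = ∅ := by
        rw [hA]
        simp only [hemp]
        simp
      show closure (A q n k N s) ⊆ g N ⁻¹' (O q n k s)
      rw [this, closure_empty]
      exact empty_subset _
    · have h1 : A q n k N s ⊆ g N ⁻¹' (D q n k s) := by
        intro x hx
        have := mem_iInter.mp hx.2 0
        simpa using this
      have h2 : IsClosed (g N ⁻¹' (D q n k s)) := (hDclosed q n k s).preimage (hg N)
      show closure (A q n k N s) ⊆ g N ⁻¹' (O q n k s)
      refine (closure_minimal h1 h2).trans ?_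
      exact preimage_mono (hDO q n k s hne)
  -- assemble the base
  set enc : ℕ → ℕ → ℕ → ℕ → ℕ := fun q n k N => Nat.pair (Nat.pair q n) (Nat.pair k N)
  set 𝓑 : ℕ → Set (Set X) := fun p =>
    Set.range (fun s => A (Nat.unpair (Nat.unpair p).1).1 (Nat.unpair (Nat.unpair p).1).2
      (Nat.unpair (Nat.unpair p).2).1 (Nat.unpair (Nat.unpair p).2).2 s) with h𝓑
  have hmem𝓑 : ∀ q n k N s, A q n k N s ∈ 𝓑 (enc q n k N) := by
    intro q n k N s
    refine ⟨s, ?_⟩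
    simp [enc, Nat.unpair_pair]
  refine ⟨𝓑, fun p => (hSFD _ _ _ _).isSFDSetFamily_range, ?_⟩
  intro W hW
  refine ⟨{B | ∃ q n k N s, V q n s ⊆ W ∧ B = A q n k N s}, ?_, ?_⟩
  · rintro B ⟨q, n, k, N, s, _, rfl⟩
    exact mem_iUnion.mpr ⟨enc q n k N, hmem𝓑 q n k N s⟩
  · apply Subset.antisymm
    · intro x hx
      obtain ⟨ε, hε, hball⟩ := Metric.isOpen_iff.mp hW (f x) hx
      obtain ⟨q, hq⟩ := exists_pow_lt_of_lt_one (show (0:ℝ) < ε/2 by linarith)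
        (by norm_num : (1/2:ℝ) < 1)
      obtain ⟨n, s, hfxV⟩ := hVcov q (f x)
      have hVW : V q n s ⊆ W := by
        intro z hz
        apply hball
        have h1 : dist z s < (1/2)^q := Metric.mem_ball.mp (hVball q n s hz)
        have h2 : dist (f x) s < (1/2)^q := Metric.mem_ball.mp (hVball q n s hfxV)
        have : dist z (f x) ≤ dist z s + dist s (f x) := dist_triangle _ _ _
        rw [dist_comm s (f x)] at this
        exact Metric.mem_ball.mpr (by linarith)
      obtain ⟨ε', hε', hball'⟩ := Metric.isOpen_iff.mp (hVopen q n s) (f x) hfxV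
      obtain ⟨k, hk⟩ := exists_nat_one_div_lt hε'
      have hfxSh : f x ∈ Sh q n s k := by
        intro z hz
        by_contra hcon
        push_neg at hcon
        refine hz (hball' ?_)
        rw [Metric.mem_ball, dist_comm]
        push_cast at hk ⊢
        linarith
      have hev : ∀ᶠ r in atTop, dist (g r x) (f x) < ρ q n / 8 :=
        (hlim x).eventually_mem (Metric.ball_mem_nhds _ (by linarith [hρpos q n]))
      obtain ⟨N, hN⟩ := eventually_atTop.mp hev
      refine ⟨A q n k N s, ⟨q, n, k, N, s, hVW, rfl⟩, hfxSh, ?_⟩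
      refine mem_iInter.mpr (fun r => ?_)
      simp only [mem_preimage, hD, mem_setOf_eq]
      refine le_trans (Metric.infDist_le_dist_of_mem hfxSh) ?_
      exact le_of_lt (hN (N + r) (Nat.le_add_right N r))
    · rintro x ⟨B, ⟨q, n, k, N, s, hVW, rfl⟩, hxB⟩
      exact hVW (hShV q n s k hxB.1)

end B1Sigma

section K1SigmaB1

variable {X : Type*} [TopologicalSpace X] {Y : Type*} [MetricSpace Y]

lemma memB1_of_k1_sigma (hszd : StronglyZeroDimensional X) {f : X → Y}
    (hK1 : MemK1 f) (hSig : MemSigmaF f) : MemB1 f := by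
  classical
  rcases isEmpty_or_nonempty Y with hY | hY
  · haveI : IsEmpty X := ⟨fun x => (hY.false (f x)).elim⟩
    refine ⟨fun _ => f, fun n => ?_, fun x => (IsEmpty.false x).elim⟩
    have : ∀ s : Set X, IsOpen s := by
      intro s
      have : s = ∅ := eq_empty_of_isEmpty s
      rw [this]; exact isOpen_empty
    exact continuous_def.mpr (fun s _ => this _)
  obtain ⟨y₀⟩ := hY
  obtain ⟨𝓑, hSFD, hbase⟩ := hSig
  choose Uexp hUdisc hUcoz hUcl using hSFD
  -- extended expansions indexed by arbitrary sets
  set Exp : ℕ → Set X → Set X := fun m B => if h : B ∈ 𝓑 m then Uexp m ⟨B, h⟩ else ∅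
    with hExp
  have hExpEq : ∀ m (B : Set X) (h : B ∈ 𝓑 m), Exp m B = Uexp m ⟨B, h⟩ := by
    intro m B h; simp [hExp, h]
  have hExpEmpty : ∀ m (B : Set X), B ∉ 𝓑 m → Exp m B = ∅ := by
    intro m B h; simp [hExp, h]
  have hExpDisc : ∀ m, IsDiscreteFamily (fun B : Set X => Exp m B) := by
    intro m x
    obtain ⟨V, hV, hsub⟩ := hUdisc m x
    refine ⟨V, hV, ?_⟩
    intro B₁ h₁ B₂ h₂
    have h₁' : (Exp m B₁ ∩ V).Nonempty := h₁
    have h₂' : (Exp m B₂ ∩ V).Nonempty := h₂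
    have m₁ : B₁ ∈ 𝓑 m := by
      by_contra hc
      obtain ⟨z, hz, -⟩ := h₁'
      rw [hExpEmpty m B₁ hc] at hz
      exact notMem_empty z hz
    have m₂ : B₂ ∈ 𝓑 m := by
      by_contra hc
      obtain ⟨z, hz, -⟩ := h₂'
      rw [hExpEmpty m B₂ hc] at hz
      exact notMem_empty z hz
    rw [hExpEq m B₁ m₁] at h₁'
    rw [hExpEq m B₂ m₂] at h₂'
    have := hsub (show (⟨B₁, m₁⟩ : ↥(𝓑 m)) ∈ {i | (Uexp m i ∩ V).Nonempty} from h₁')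
      (show (⟨B₂, m₂⟩ : ↥(𝓑 m)) ∈ {i | (Uexp m i ∩ V).Nonempty} from h₂')
    exact congrArg Subtype.val this
  have hExpCoz : ∀ m B, IsCozeroSet (Exp m B) := by
    intro m B
    by_cases h : B ∈ 𝓑 m
    · rw [hExpEq m B h]; exact hUcoz m _
    · rw [hExpEmpty m B h]; exact isCozeroSet_empty
  have hExpCl : ∀ m (B : Set X), B ∈ 𝓑 m → B ⊆ Exp m B := by
    intro m B h
    rw [hExpEq m B h]
    exact subset_closure.trans (hUcl m ⟨B, h⟩)
  -- smallness and centers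
  set Sm : ℕ → Set X → Prop := fun k B => ∃ y', ∀ x ∈ B, f x ∈ Metric.ball y' ((1/2 : ℝ)^k)
    with hSm
  set ctr : ℕ → Set X → Y := fun k B => if h : Sm k B then h.choose else y₀ with hctr
  have hctrSpec : ∀ k (B : Set X), Sm k B → ∀ x ∈ B, f x ∈ Metric.ball (ctr k B) ((1/2 : ℝ)^k) := by
    intro k B h
    rw [hctr]
    simp only [h, dif_pos]
    exact h.choose_spec
  -- zero-set decomposition of preimages of balls (K1)
  choose Zf hZfzero hZfeq using
    fun (k : ℕ) (B : Set X) => hK1 (Metric.ball (ctr k B) ((1/2 : ℝ)^k)) Metric.isOpen_ball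
  -- zero-set decomposition of expansions
  choose Vm hVmzero hVmmono hVmeq using fun (m : ℕ) (B : Set X) => (hExpCoz m B).exists_zero_seq
  -- decoding of family indices
  set dec : ℕ → ℕ × ℕ × ℕ := fun p =>
    ((Nat.unpair p).1, (Nat.unpair (Nat.unpair p).2).1, (Nat.unpair (Nat.unpair p).2).2)
    with hdec
  -- the cores
  set Co : ℕ → ℕ → Set X → Set X := fun k p B =>
    if B ∈ 𝓑 (dec p).1 ∧ Sm k B then Zf k B (dec p).2.1 ∩ Vm (dec p).1 B (dec p).2.2 else ∅
    with hCo
  have hCozero : ∀ k p B, IsZeroSet (Co k p B) := by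
    intro k p B
    simp only [hCo]
    by_cases h : B ∈ 𝓑 (dec p).1 ∧ Sm k B
    · rw [if_pos h]
      exact (hZfzero k B _).inter (hVmzero _ B _)
    · rw [if_neg h]
      exact isZeroSet_empty
  have hCoU : ∀ k p B, Co k p B ⊆ Exp (dec p).1 B := by
    intro k p B
    simp only [hCo]
    by_cases h : B ∈ 𝓑 (dec p).1 ∧ Sm k B
    · rw [if_pos h]
      intro x hx
      rw [hVmeq (dec p).1 B]
      exact mem_iUnion.mpr ⟨(dec p).2.2, hx.2⟩
    · rw [if_neg h]
      exact empty_subset _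
  have hCoSmall : ∀ k p B x', x' ∈ Co k p B →
      f x' ∈ Metric.ball (ctr k B) ((1/2 : ℝ)^k) := by
    intro k p B x' hx'
    simp only [hCo] at hx'
    by_cases h : B ∈ 𝓑 (dec p).1 ∧ Sm k B
    · rw [if_pos h] at hx'
      have : x' ∈ f ⁻¹' (Metric.ball (ctr k B) ((1/2 : ℝ)^k)) := by
        rw [hZfeq k B]
        exact mem_iUnion.mpr ⟨(dec p).2.1, hx'.1⟩
      exact this
    · rw [if_neg h] at hx'
      exact absurd hx' (notMem_empty _)
  -- covering
  have hCocov : ∀ (k : ℕ) (x : X), ∃ p B, x ∈ Co k p B := by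
    intro k x
    obtain ⟨𝓢, h𝓢sub, h𝓢eq⟩ := hbase (Metric.ball (f x) ((1/2 : ℝ)^k)) Metric.isOpen_ball
    have hx : x ∈ ⋃₀ 𝓢 := by
      rw [← h𝓢eq]
      exact Metric.mem_ball_self (by positivity)
    obtain ⟨S, hS𝓢, hxS⟩ := hx
    obtain ⟨m, hSm'⟩ := mem_iUnion.mp (h𝓢sub hS𝓢)
    have hsmall : Sm k S := by
      refine ⟨f x, fun x' hx' => ?_⟩
      have : x' ∈ f ⁻¹' (Metric.ball (f x) ((1/2 : ℝ)^k)) := by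
        rw [h𝓢eq]; exact ⟨S, hS𝓢, hx'⟩
      exact this
    have hxT : x ∈ f ⁻¹' (Metric.ball (ctr k S) ((1/2 : ℝ)^k)) :=
      hctrSpec k S hsmall x hxS
    rw [hZfeq k S] at hxT
    obtain ⟨j, hj⟩ := mem_iUnion.mp hxT
    have hxE : x ∈ Exp m S := hExpCl m S hSm' hxS
    rw [hVmeq m S] at hxE
    obtain ⟨l, hl⟩ := mem_iUnion.mp hxE
    refine ⟨Nat.pair m (Nat.pair j l), S, ?_⟩
    have hdecp : dec (Nat.pair m (Nat.pair j l)) = (m, j, l) := by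
      rw [hdec]; simp [Nat.unpair_pair]
    have key : Co k (Nat.pair m (Nat.pair j l)) S = Zf k S j ∩ Vm m S l := by
      simp only [hCo, hdec, Nat.unpair_pair]
      rw [if_pos ⟨hSm', hsmall⟩]
    rw [key]
    exact ⟨hj, hl⟩
  -- clopen approximants via strong zero-dimensionality
  choose Wap hWapClopen hWapAdj hWapCo hWapExp hWapInter using
    fun (k p : ℕ) (B : Set X) =>
      hszd.cset_between (hCozero k p B) (hExpCoz (dec p).1 B) (hCoU k p B)
  have hWapMono : ∀ k p (B : Set X), ∀ t t', t ≤ t' → Wap k p B t' ⊆ Wap k p B t := by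
    intro k p B
    exact fun t t' h => antitone_nat_of_succ_le (fun n => hWapAdj k p B n) h
  have hWapUnique : ∀ k p (B B' : Set X) t t' x', x' ∈ Wap k p B t → x' ∈ Wap k p B' t' →
      B = B' := by
    intro k p B B' t t' x' h1 h2
    by_contra hne
    exact (hExpDisc (dec p).1).disjoint hne (hWapExp k p B t h1) (hWapExp k p B' t' h2)
  -- capture predicate and capture sets
  set Cap : ℕ → ℕ → Set X → ℕ → X → Prop := fun k p core N x' =>
    ∃ B : Set X, (core ∩ Co k p B).Nonempty ∧ x' ∈ Wap k p B N with hCap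
  have hCapClopen : ∀ k p (core : Set X) N, IsClopen {x' : X | Cap k p core N x'} := by
    intro k p core N
    have heq : {x' : X | Cap k p core N x'} =
        ⋃ B ∈ {B : Set X | (core ∩ Co k p B).Nonempty}, Wap k p B N := by
      ext x'
      simp only [hCap, mem_setOf_eq, mem_iUnion, exists_prop]
    rw [heq]
    exact ((hExpDisc (dec p).1).mono (fun B => hWapExp k p B N)).isClopen_biUnion
      (fun B => hWapClopen k p B N) _
  -- selection of the member realising a capture
  set selB : ℕ → ℕ → Set X → ℕ → X → Set X := fun k p core N x' =>
    if h : ∃ B : Set X, (core ∩ Co k p B).Nonempty ∧ x' ∈ Wap k p B N then h.choose else ∅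
    with hselB
  have hselBspec : ∀ k p (core : Set X) N x', Cap k p core N x' →
      (core ∩ Co k p (selB k p core N x')).Nonempty ∧ x' ∈ Wap k p (selB k p core N x') N := by
    intro k p core N x' hcap
    simp only [hCap] at hcap
    simp only [hselB]
    rw [dif_pos hcap]
    exact hcap.choose_spec
  -- one greedy step
  set nextF : ℕ → X → ℕ → Set X → Option (ℕ × Set X) := fun N x k core =>
    if h : ∃ p, p < N ∧ Cap k p core N x then
      some (Nat.find h, selB k (Nat.find h) core N x)
    else none with hnextF
  set stepF : ℕ → X → ℕ → (Set X × List (ℕ × Set X) × Bool) →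
      (Set X × List (ℕ × Set X) × Bool) := fun N x k st =>
    if st.2.2 = true then st else
      match nextF N x k st.1 with
      | none => (st.1, st.2.1, true)
      | some pb => (st.1 ∩ Co k pb.1 pb.2, pb :: st.2.1, false)
    with hstepF
  set stateF : ℕ → X → ℕ → (Set X × List (ℕ × Set X) × Bool) := fun N x k =>
    Nat.rec (univ, [], false) (fun k' st => stepF N x (k'+1) st) k with hstateF
  have hstate_zero : ∀ N x, stateF N x 0 = (univ, [], false) := fun N x => rfl
  have hstate_succ : ∀ N x k, stateF N x (k+1) = stepF N x (k+1) (stateF N x k) :=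
    fun N x k => rfl
  have hstep_stop : ∀ N x k st, st.2.2 = true → stepF N x k st = st := by
    intro N x k st h
    simp only [hstepF]
    rw [if_pos h]
  have hstep_none : ∀ N x k st, st.2.2 = false → nextF N x k st.1 = none →
      stepF N x k st = (st.1, st.2.1, true) := by
    intro N x k st h hn
    simp only [hstepF]
    rw [if_neg (by rw [h]; simp), hn]
  have hstep_some : ∀ N x k st pb, st.2.2 = false → nextF N x k st.1 = some pb →
      stepF N x k st = (st.1 ∩ Co k pb.1 pb.2, pb :: st.2.1, false) := by
    intro N x k st pb h hn
    simp only [hstepF]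
    rw [if_neg (by rw [h]; simp), hn]
  have hnext_of_not : ∀ N x k (core : Set X), (¬ ∃ p, p < N ∧ Cap k p core N x) →
      nextF N x k core = none := by
    intro N x k core h
    simp only [hnextF]
    rw [dif_neg h]
  have hnext_of_ex : ∀ N x k (core : Set X) (h : ∃ p, p < N ∧ Cap k p core N x),
      nextF N x k core = some (Nat.find h, selB k (Nat.find h) core N x) := by
    intro N x k core h
    simp only [hnextF]
    rw [dif_pos h]
  -- the value of a finished chain
  set valFn : List (ℕ × Set X) → Y := fun L =>
    match L with
    | [] => y₀
    | e :: _ => ctr L.length e.2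
    with hvalFn
  have hval_cons : ∀ (e : ℕ × Set X) t, valFn (e :: t) = ctr (t.length + 1) e.2 := by
    intro e t
    simp only [hvalFn]
    rfl
  -- locally, all states agree
  have hlocal : ∀ N x k, ∃ O : Set X, IsOpen O ∧ x ∈ O ∧
      ∀ x' ∈ O, stateF N x' k = stateF N x k := by
    intro N x k
    induction k with
    | zero => exact ⟨univ, isOpen_univ, mem_univ x, fun x' _ => rfl⟩
    | succ k ih =>
      obtain ⟨O, hO, hxO, hOst⟩ := ih
      rcases hb : (stateF N x k).2.2 with _ | _
      · -- not stopped
        set core := (stateF N x k).1 with hcore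
        rcases hn : nextF N x (k+1) core with _ | pb
        · -- no capture
          refine ⟨O ∩ ⋂ p ∈ Finset.range N, {x' : X | Cap (k+1) p core N x'}ᶜ, ?_, ?_, ?_⟩
          · exact hO.inter (isOpen_biInter_finset
              (fun p _ => (hCapClopen (k+1) p core N).compl.isOpen))
          · refine mem_inter hxO (mem_iInter₂.mpr (fun p hp => ?_))
            intro hcap
            have hnone : ¬ ∃ p', p' < N ∧ Cap (k+1) p' core N x := by
              intro hex
              rw [hnext_of_ex N x (k+1) core hex] at hn
              cases hn
            exact hnone ⟨p, Finset.mem_range.mp hp, hcap⟩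
          · intro x' hx'
            rw [hstate_succ N x' k, hstate_succ N x k]
            rw [hOst x' hx'.1]
            have hnone' : nextF N x' (k+1) core = none := by
              refine hnext_of_not N x' (k+1) core ?_
              rintro ⟨p, hpN, hcap⟩
              exact (mem_iInter₂.mp hx'.2 p (Finset.mem_range.mpr hpN)) hcap
            rw [hstep_none N x' (k+1) _ hb (by rw [← hcore]; exact hnone'),
              hstep_none N x (k+1) _ hb (by rw [← hcore]; exact hn)]
        · -- capture at pb
          have hex : ∃ p', p' < N ∧ Cap (k+1) p' core N x := by
            by_contra hne
            rw [hnext_of_not N x (k+1) core hne] at hn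
            cases hn
          have hn' := hn
          rw [hnext_of_ex N x (k+1) core hex] at hn'
          have hp1 : Nat.find hex = pb.1 := by
            have := congrArg (fun o => Option.map Prod.fst o) hn'
            simpa using this
          have hB1 : selB (k+1) (Nat.find hex) core N x = pb.2 := by
            have := congrArg (fun o => Option.map Prod.snd o) hn'
            simpa using this
          have hfind := Nat.find_spec hex
          have hcapx : Cap (k+1) pb.1 core N x := by rw [← hp1]; exact hfind.2
          have hpbN : pb.1 < N := by rw [← hp1]; exact hfind.1
          have hsel := hselBspec (k+1) pb.1 core N x hcapx
          have hselB_eq : selB (k+1) pb.1 core N x = pb.2 := by rw [← hp1]; exact hB1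
          rw [hselB_eq] at hsel
          refine ⟨O ∩ Wap (k+1) pb.1 pb.2 N ∩
            ⋂ p ∈ Finset.range pb.1, {x' : X | Cap (k+1) p core N x'}ᶜ, ?_, ?_, ?_⟩
          · exact (hO.inter (hWapClopen (k+1) pb.1 pb.2 N).isOpen).inter
              (isOpen_biInter_finset (fun p _ => (hCapClopen (k+1) p core N).compl.isOpen))
          · refine mem_inter (mem_inter hxO hsel.2) (mem_iInter₂.mpr (fun p hp => ?_))
            intro hcap
            have hplt : p < Nat.find hex := by rw [hp1]; exact Finset.mem_range.mp hp
            exact (Nat.find_min hex hplt) ⟨lt_trans hplt (hp1 ▸ hpbN), hcap⟩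
          · intro x' hx'
            rw [hstate_succ N x' k, hstate_succ N x k]
            rw [hOst x' hx'.1.1]
            have hex' : ∃ p', p' < N ∧ Cap (k+1) p' core N x' :=
              ⟨pb.1, hpbN, ⟨pb.2, hsel.1, hx'.1.2⟩⟩
            have hfind' : Nat.find hex' = pb.1 := by
              rw [Nat.find_eq_iff hex']
              refine ⟨⟨hpbN, ⟨pb.2, hsel.1, hx'.1.2⟩⟩, ?_⟩
              intro p hplt hcontra
              exact (mem_iInter₂.mp hx'.2 p (Finset.mem_range.mpr hplt)) hcontra.2
            have hcapx' : Cap (k+1) pb.1 core N x' := ⟨pb.2, hsel.1, hx'.1.2⟩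
            have hsel' := hselBspec (k+1) pb.1 core N x' hcapx'
            have hselB_eq' : selB (k+1) pb.1 core N x' = pb.2 :=
              hWapUnique (k+1) pb.1 _ pb.2 N N x' hsel'.2 hx'.1.2
            have hn'' : nextF N x' (k+1) core = some pb := by
              rw [hnext_of_ex N x' (k+1) core hex', hfind', hselB_eq']
            rw [hstep_some N x' (k+1) _ pb hb (by rw [← hcore]; exact hn''),
              hstep_some N x (k+1) _ pb hb (by rw [← hcore]; exact hn)]
      · -- stopped: state frozen
        refine ⟨O, hO, hxO, fun x' hx' => ?_⟩
        rw [hstate_succ N x' k, hstate_succ N x k, hOst x' hx']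
        rw [hstep_stop N x' (k+1) _ hb, hstep_stop N x (k+1) _ hb]
  have hnext_some_spec : ∀ N x k (core : Set X) pb, nextF N x k core = some pb →
      (core ∩ Co k pb.1 pb.2).Nonempty ∧ x ∈ Wap k pb.1 pb.2 N ∧ pb.1 < N := by
    intro N x k core pb hn
    have hex : ∃ p', p' < N ∧ Cap k p' core N x := by
      by_contra hne
      rw [hnext_of_not N x k core hne] at hn
      cases hn
    have hn' := hn
    rw [hnext_of_ex N x k core hex] at hn'
    have hp1 : Nat.find hex = pb.1 := by
      simpa using congrArg (fun o => Option.map Prod.fst o) hn'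
    have hB1 : selB k pb.1 core N x = pb.2 := by
      have := congrArg (fun o => Option.map Prod.snd o) hn'
      rw [hp1] at this
      simpa using this
    have hcap : Cap k pb.1 core N x := by rw [← hp1]; exact (Nat.find_spec hex).2
    have hsel := hselBspec k pb.1 core N x hcap
    rw [hB1] at hsel
    exact ⟨hsel.1, hsel.2, hp1 ▸ (Nat.find_spec hex).1⟩
  have hChainCases : ∀ N x k,
      ((stateF N x (k+1)).2.1 = (stateF N x k).2.1 ∧ (stateF N x (k+1)).1 = (stateF N x k).1)
      ∨ ∃ pb, (stateF N x k).2.2 = false ∧ nextF N x (k+1) (stateF N x k).1 = some pb ∧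
          stateF N x (k+1) =
            ((stateF N x k).1 ∩ Co (k+1) pb.1 pb.2, pb :: (stateF N x k).2.1, false) := by
    intro N x k
    rcases hb : (stateF N x k).2.2 with _|_
    · rcases hn : nextF N x (k+1) (stateF N x k).1 with _|pb
      · left
        rw [hstate_succ, hstep_none N x (k+1) _ hb hn]
        exact ⟨rfl, rfl⟩
      · right
        exact ⟨pb, rfl, rfl, by rw [hstate_succ, hstep_some N x (k+1) _ pb hb hn]⟩
    · left
      rw [hstate_succ, hstep_stop N x (k+1) _ hb]
      exact ⟨rfl, rfl⟩
  have hInvLen : ∀ N x k, (stateF N x k).2.2 = false → (stateF N x k).2.1.length = k := by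
    intro N x k
    induction k with
    | zero => intro _; rfl
    | succ k ih =>
      intro hb
      rcases hb' : (stateF N x k).2.2 with _|_
      · rcases hn : nextF N x (k+1) (stateF N x k).1 with _|pb
        · rw [hstate_succ, hstep_none N x (k+1) _ hb' hn] at hb
          simp at hb
        · rw [hstate_succ, hstep_some N x (k+1) _ pb hb' hn]
          simp [ih hb']
      · rw [hstate_succ, hstep_stop N x (k+1) _ hb'] at hb
        rw [hb'] at hb
        simp at hb
  have hInvHead : ∀ N x k (e : ℕ × Set X) t, (stateF N x k).2.1 = e :: t →
      (stateF N x k).1 ⊆ Co (e :: t).length e.1 e.2 := by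
    intro N x k
    induction k with
    | zero =>
      intro e t h
      rw [hstate_zero] at h
      exact absurd h (by simp)
    | succ k ih =>
      intro e t h
      rcases hChainCases N x k with ⟨hch, hco⟩ | ⟨pb, hb, hn, hst⟩
      · rw [hch] at h
        rw [hco]
        exact ih e t h
      · rw [hst] at h ⊢
        simp only at h
        have he : pb = e ∧ (stateF N x k).2.1 = t := by
          constructor
          · exact (List.cons.injEq _ _ _ _ ▸ h).1
          · exact (List.cons.injEq _ _ _ _ ▸ h).2
        have hlen : (e :: t).length = k + 1 := by
          rw [← h]
          simp [hInvLen N x k hb]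
        rw [hlen, ← he.1]
        exact inter_subset_right
  have hValTel : ∀ N x k, (stateF N x k).2.2 = false → 1 ≤ k → ∀ j,
      dist (valFn ((stateF N x (k+j)).2.1)) (valFn ((stateF N x k).2.1)) ≤
        4 * ((1/2:ℝ)^k - (1/2:ℝ)^((stateF N x (k+j)).2.1.length)) ∧
      k ≤ (stateF N x (k+j)).2.1.length := by
    intro N x k hb hk1 j
    induction j with
    | zero =>
      simp only [Nat.add_zero]
      constructor
      · rw [dist_self, hInvLen N x k hb]
        simp
      · rw [hInvLen N x k hb]
    | succ j ih =>
      have hadd : k + (j+1) = (k+j) + 1 := by omega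
      rw [hadd]
      rcases hChainCases N x (k+j) with ⟨hch, _⟩ | ⟨pb, hb', hn, hst⟩
      · rw [hch]
        exact ih
      · have hlenkj : (stateF N x (k+j)).2.1.length = k + j := hInvLen N x (k+j) hb'
        have hkj1 : 1 ≤ (stateF N x (k+j)).2.1.length := by omega
        obtain ⟨e, t, hLet⟩ := List.exists_cons_of_ne_nil
          (show (stateF N x (k+j)).2.1 ≠ [] by
            intro hnil; rw [hnil] at hlenkj; simp at hlenkj; omega)
        obtain ⟨hcoreNE, -, -⟩ := hnext_some_spec N x (k+j+1) _ pb hn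
        obtain ⟨z, hz1, hz2⟩ := hcoreNE
        have hz3 : z ∈ Co (e :: t).length e.1 e.2 := hInvHead N x (k+j) e t hLet hz1
        have hzlen : (e :: t).length = k + j := by rw [← hLet]; exact hlenkj
        have hfz1 : f z ∈ Metric.ball (ctr (k+j) e.2) ((1/2:ℝ)^(k+j)) := by
          rw [hzlen] at hz3
          exact hCoSmall (k+j) e.1 e.2 z hz3
        have hfz2 : f z ∈ Metric.ball (ctr (k+j+1) pb.2) ((1/2:ℝ)^(k+j+1)) :=
          hCoSmall (k+j+1) pb.1 pb.2 z hz2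
        have hdist : dist (ctr (k+j+1) pb.2) (ctr (k+j) e.2) ≤
            (1/2:ℝ)^(k+j+1) + (1/2:ℝ)^(k+j) := by
          have h1 : dist (f z) (ctr (k+j+1) pb.2) < (1/2:ℝ)^(k+j+1) := Metric.mem_ball.mp hfz2
          have h2 : dist (f z) (ctr (k+j) e.2) < (1/2:ℝ)^(k+j) := Metric.mem_ball.mp hfz1
          calc dist (ctr (k+j+1) pb.2) (ctr (k+j) e.2)
              ≤ dist (ctr (k+j+1) pb.2) (f z) + dist (f z) (ctr (k+j) e.2) := dist_triangle _ _ _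
            _ ≤ (1/2:ℝ)^(k+j+1) + (1/2:ℝ)^(k+j) := by
                rw [dist_comm (ctr (k+j+1) pb.2) (f z)]
                linarith
        have hvalnew : valFn ((stateF N x (k+j+1)).2.1) = ctr (k+j+1) pb.2 := by
          rw [hst]
          simp only
          rw [hval_cons, hlenkj]
        have hvalold : valFn ((stateF N x (k+j)).2.1) = ctr (k+j) e.2 := by
          have hlt : t.length + 1 = k + j := by
            have h' := hlenkj
            rw [hLet] at h'
            simpa using h'
          rw [hLet, hval_cons, hlt]
        have hlennew : (stateF N x (k+j+1)).2.1.length = k + j + 1 := by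
          rw [hst]
          simp [hlenkj]
        constructor
        · rw [hvalnew, hlennew]
          calc dist (ctr (k+j+1) pb.2) (valFn ((stateF N x k).2.1))
              ≤ dist (ctr (k+j+1) pb.2) (ctr (k+j) e.2) +
                dist (ctr (k+j) e.2) (valFn ((stateF N x k).2.1)) := dist_triangle _ _ _
            _ ≤ ((1/2:ℝ)^(k+j+1) + (1/2:ℝ)^(k+j)) +
                4 * ((1/2:ℝ)^k - (1/2:ℝ)^(k+j)) := by
                have := ih.1
                rw [hvalold] at this
                rw [hlenkj] at this
                linarith [hdist]
            _ ≤ 4 * ((1/2:ℝ)^k - (1/2:ℝ)^(k+j+1)) := by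
                have hpow : (1/2:ℝ)^(k+j+1) = (1/2) * (1/2:ℝ)^(k+j) := by ring
                rw [hpow]
                have : (0:ℝ) ≤ (1/2:ℝ)^(k+j) := by positivity
                linarith
        · rw [hlennew]; omega
  -- stability of the chain prefix
  have hstable : ∀ x k, ∃ (Nk : ℕ) (K : Set X) (L : List (ℕ × Set X)),
      x ∈ K ∧ L.length = k ∧ ∀ N, Nk ≤ N → stateF N x k = (K, L, false) := by
    intro x k
    induction k with
    | zero => exact ⟨0, univ, [], mem_univ x, rfl, fun N _ => hstate_zero N x⟩
    | succ k ih =>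
      obtain ⟨Nk, K, L, hxK, hLlen, hst⟩ := ih
      have hP : ∃ p, ∃ B, x ∈ Co (k+1) p B := by
        obtain ⟨p, B, h⟩ := hCocov (k+1) x
        exact ⟨p, B, h⟩
      set pstar := Nat.find hP with hpstar
      obtain ⟨Bstar, hBstar⟩ := Nat.find_spec hP
      have hkill : ∀ p, ∃ Np, p < pstar → ∀ N, Np ≤ N → ¬ Cap (k+1) p K N x := by
        intro p
        by_cases hEx : ∃ B : Set X, x ∈ Exp (dec p).1 B
        · obtain ⟨B₀, hB₀⟩ := hEx
          by_cases hxCo : x ∈ Co (k+1) p B₀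
          · refine ⟨0, fun hplt => ?_⟩
            exact absurd ⟨B₀, hxCo⟩ (Nat.find_min hP hplt)
          · have : ∃ t₀, x ∉ Wap (k+1) p B₀ t₀ := by
              by_contra hcon
              push_neg at hcon
              exact hxCo ((hWapInter (k+1) p B₀) ▸ mem_iInter.mpr hcon)
            obtain ⟨t₀, ht₀⟩ := this
            refine ⟨t₀, fun _ N hN hcap => ?_⟩
            obtain ⟨B', hB'ne, hB'w⟩ := hcap
            have hBeq : B' = B₀ := by
              by_contra hne
              exact (hExpDisc (dec p).1).disjoint hne (hWapExp (k+1) p B' N hB'w) hB₀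
            rw [hBeq] at hB'w
            exact ht₀ (hWapMono (k+1) p B₀ t₀ N hN hB'w)
        · refine ⟨0, fun _ N _ hcap => ?_⟩
          obtain ⟨B', -, hB'w⟩ := hcap
          exact hEx ⟨B', hWapExp (k+1) p B' N hB'w⟩
      choose Np hNp using hkill
      refine ⟨max (max Nk (pstar+1)) ((Finset.range pstar).sup Np),
        K ∩ Co (k+1) pstar Bstar, (pstar, Bstar) :: L, ⟨hxK, hBstar⟩, by simp [hLlen], ?_⟩
      intro N hN
      have hNk : Nk ≤ N := le_trans (le_trans (le_max_left _ _) (le_max_left _ _)) hN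
      have hpN : pstar < N :=
        lt_of_lt_of_le (Nat.lt_succ_self _)
          (le_trans (le_trans (le_max_right _ _) (le_max_left _ _)) hN)
      have hex : ∃ p, p < N ∧ Cap (k+1) p K N x :=
        ⟨pstar, hpN, ⟨Bstar, ⟨x, hxK, hBstar⟩, hWapCo (k+1) pstar Bstar N hBstar⟩⟩
      have hfind : Nat.find hex = pstar := by
        rw [Nat.find_eq_iff hex]
        refine ⟨⟨hpN, ⟨Bstar, ⟨x, hxK, hBstar⟩, hWapCo (k+1) pstar Bstar N hBstar⟩⟩, ?_⟩
        intro p hplt hcon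
        refine hNp p hplt N ?_ hcon.2
        exact le_trans (le_trans (Finset.le_sup (Finset.mem_range.mpr hplt))
          (le_max_right _ _)) hN
      have hcap : Cap (k+1) pstar K N x := by
        rw [← hfind]
        exact (Nat.find_spec hex).2
      have hsel := hselBspec (k+1) pstar K N x hcap
      have hselEq : selB (k+1) pstar K N x = Bstar :=
        hWapUnique (k+1) pstar _ Bstar N N x hsel.2 (hWapCo (k+1) pstar Bstar N hBstar)
      have hn : nextF N x (k+1) K = some (pstar, Bstar) := by
        rw [hnext_of_ex N x (k+1) K hex, hfind, hselEq]
      rw [hstate_succ, hst N hNk,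
        hstep_some N x (k+1) (K, L, false) (pstar, Bstar) rfl hn]
  -- assemble the Baire-one witness
  refine ⟨fun N x => valFn ((stateF N x N).2.1), ?_, ?_⟩
  · intro N
    rw [continuous_iff_continuousAt]
    intro x
    obtain ⟨O, hO, hxO, hOst⟩ := hlocal N x N
    have hev : ∀ᶠ x' in 𝓝 x, valFn ((stateF N x' N).2.1) = valFn ((stateF N x N).2.1) :=
      eventually_of_mem (hO.mem_nhds hxO) (fun x' hx' => by rw [hOst x' hx'])
    exact Tendsto.congr' (hev.mono fun x' h => h.symm) tendsto_const_nhds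
  · intro x
    rw [Metric.tendsto_atTop]
    intro ε hε
    obtain ⟨k₀, hk₀⟩ := exists_pow_lt_of_lt_one (show (0:ℝ) < ε/6 by linarith)
      (by norm_num : (1/2:ℝ) < 1)
    set k := k₀ + 1 with hkdef
    have hkpow : (1/2:ℝ)^k ≤ (1/2:ℝ)^k₀ := by
      apply pow_le_pow_of_le_one <;> norm_num <;> omega
    obtain ⟨Nk, K, L, hxK, hLlen, hst⟩ := hstable x k
    refine ⟨max Nk k, fun N hN => ?_⟩
    have hNk : Nk ≤ N := le_trans (le_max_left _ _) hN
    have hkN : k ≤ N := le_trans (le_max_right _ _) hN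
    have hstN := hst N hNk
    have hb : (stateF N x k).2.2 = false := by rw [hstN]
    have hlen : (stateF N x k).2.1 = L := by rw [hstN]
    have hLne : L ≠ [] := by
      intro h
      rw [h] at hLlen
      simp at hLlen
    obtain ⟨e, t, hLet⟩ := List.exists_cons_of_ne_nil hLne
    obtain ⟨htel, -⟩ := hValTel N x k hb (by omega) (N - k)
    rw [Nat.add_sub_cancel' hkN] at htel
    have hxCo : x ∈ Co k e.1 e.2 := by
      have hsub := hInvHead N x k e t (by rw [hlen, hLet])
      have hxcore : x ∈ (stateF N x k).1 := by rw [hstN]; exact hxK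
      have := hsub hxcore
      have hlencons : (e :: t).length = k := by rw [← hLet, hLlen]
      rwa [hlencons] at this
    have hfx : dist (ctr k e.2) (f x) < (1/2:ℝ)^k := by
      have := hCoSmall k e.1 e.2 x hxCo
      rw [Metric.mem_ball] at this
      rw [dist_comm]
      exact this
    have hvalk : valFn ((stateF N x k).2.1) = ctr k e.2 := by
      rw [hlen, hLet, hval_cons]
      congr 1
      have h1 : (e :: t).length = k := by rw [← hLet, hLlen]
      simp at h1
      omega
    have htel' : dist (valFn ((stateF N x N).2.1)) (ctr k e.2) ≤ 4 * (1/2:ℝ)^k := by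
      rw [← hvalk]
      refine le_trans htel ?_
      have : (0:ℝ) ≤ (1/2:ℝ)^((stateF N x N).2.1.length) := by positivity
      linarith
    calc dist (valFn ((stateF N x N).2.1)) (f x)
        ≤ dist (valFn ((stateF N x N).2.1)) (ctr k e.2) + dist (ctr k e.2) (f x) :=
          dist_triangle _ _ _
      _ ≤ 4 * (1/2:ℝ)^k + (1/2:ℝ)^k := by linarith
      _ = 5 * (1/2:ℝ)^k := by ring
      _ ≤ 5 * (1/2:ℝ)^k₀ := by linarith
      _ < ε := by linarith

end K1SigmaB1

theorem stmt19 {X Y : Type*} [TopologicalSpace X] [TopologicalSpace Y]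
    [TopologicalSpace.MetrizableSpace Y]
    (hX : (LocallyCompactSpace X ∧ ParacompactSpace X ∧ T2Space X) ∨
      CountablyCompactIn (Set.univ : Set X))
    (hY : ∃ U V : Set Y, IsClopen U ∧ IsClopen V ∧ U.Nonempty ∧ V.Nonempty ∧
      Disjoint U V ∧ U ∪ V = Set.univ) :
    (∀ f : X → Y, (MemK1 f ∧ MemSigmaF f) ↔ MemB1 f) ↔ StronglyZeroDimensional X := by
  letI : MetricSpace Y := TopologicalSpace.metrizableSpaceMetric Y
  constructor
  · intro H
    have ha : AlmostStronglyZeroDimensional X := almostSZD_of_forall hY H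
    rcases hX with ⟨hlc, hpara, ht2⟩ | hcc
    · haveI := hlc; haveI := hpara; haveI := ht2
      exact szd_of_lc ha
    · exact szd_of_cc hcc ha
  · intro hszd f
    constructor
    · rintro ⟨hK1, hSig⟩
      exact memB1_of_k1_sigma hszd hK1 hSig
    · intro hB1
      exact ⟨memK1_of_memB1 hB1, memSigmaF_of_memB1 hB1⟩
end
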